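/- arXiv:2002.09336 — 8 statements merged into one kernel-verified Lean document; each statement's English description precedes it below -/
import Mathlib

section
/- Let U and V be real Hilbert spaces and F : U → V a bounded linear operator. For every ν with 0 ≤ ν ≤ 1/2 and every u ∈ U one has the interpolation inequality ‖(F*F)^ν u‖ ≤ ‖Fu‖^(2ν) · ‖u‖^(1−2ν), where (F*F)^ν denotes the fractional power (via the continuous functional calculus) of the positive self-adjoint operator F*F. -/
open ContinuousLinearMap
open scoped RealInnerProductSpace

noncomputable section

/-- `P` is the fractional power `T ^ ν` of the (positive self-adjoint) operator `T`, defined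
via the continuous functional calculus: there is a continuous star-algebra homomorphism from
`C(σ(T), ℝ)` to the bounded operators mapping the identity function to `T` (such a
homomorphism is unique by Stone–Weierstrass), and `P` is the image of (a continuous extension
of) the function `x ↦ x ^ ν`. -/
def IsFractionalPower {W : Type*} [NormedAddCommGroup W] [InnerProductSpace ℝ W]
    [CompleteSpace W] (T : W →L[ℝ] W) (ν : ℝ) (P : W →L[ℝ] W) : Prop :=
  ∃ Φ : C(spectrum ℝ T, ℝ) →⋆ₐ[ℝ] (W →L[ℝ] W),
    Continuous Φ ∧
    Φ ((ContinuousMap.id ℝ).restrict (spectrum ℝ T)) = T ∧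
    ∃ f : C(ℝ, ℝ), (∀ x ∈ spectrum ℝ T, f x = x ^ ν) ∧
      Φ (f.restrict (spectrum ℝ T)) = P

/-- `ξ` is a subgradient of the extended-real-valued functional `R` at `u`:
`R u < +∞` and `R w ≥ R u + ⟪ξ, w - u⟫` for all `w`. -/
def IsSubgradient {U : Type*} [NormedAddCommGroup U] [InnerProductSpace ℝ U]
    (R : U → EReal) (ξ u : U) : Prop :=
  R u < ⊤ ∧ ∀ w, R u + ((⟪ξ, w - u⟫ : ℝ) : EReal) ≤ R w

/-- Convexity for extended-real-valued functionals. -/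
def ErealConvexOn {U : Type*} [NormedAddCommGroup U] [InnerProductSpace ℝ U]
    (R : U → EReal) : Prop :=
  ∀ u w : U, ∀ t : ℝ, 0 ≤ t → t ≤ 1 →
    R (t • u + (1 - t) • w) ≤ ((t : ℝ) : EReal) * R u + (((1 - t : ℝ)) : EReal) * R w

/-- The Bregman distance `D_ξ(w, u) = R w - R u - ⟪ξ, w - u⟫`. -/
def Breg {U : Type*} [NormedAddCommGroup U] [InnerProductSpace ℝ U]
    (R : U → EReal) (ξ w u : U) : EReal :=
  R w - R u - ((⟪ξ, w - u⟫ : ℝ) : EReal)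

/-- The Tikhonov functional `T_α(u) = (1/2)‖F u - v‖² + α R(u)`. -/
def Tik {U V : Type*} [NormedAddCommGroup U] [InnerProductSpace ℝ U]
    [NormedAddCommGroup V] [InnerProductSpace ℝ V]
    (F : U →L[ℝ] V) (R : U → EReal) (α : ℝ) (v : V) (u : U) : EReal :=
  (((1 : ℝ) / 2 * ‖F u - v‖ ^ 2 : ℝ) : EReal) + ((α : ℝ) : EReal) * R u

/-- A coercive operator on a real Hilbert space is a unit (Lax–Milgram). -/
lemma aux_isUnit_of_coercive {W : Type*} [NormedAddCommGroup W] [InnerProductSpace ℝ W]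
    [CompleteSpace W] (S : W →L[ℝ] W) {C : ℝ} (hC : 0 < C)
    (h : ∀ w, C * ‖w‖ * ‖w‖ ≤ ⟪S w, w⟫) : IsUnit S := by
  set B : W →L[ℝ] W →L[ℝ] ℝ := (innerSL ℝ).comp S with hB
  have hBapp : ∀ v w, B v w = ⟪S v, w⟫ := fun v w => rfl
  have hcoer : IsCoercive B := ⟨C, hC, fun w => by rw [hBapp]; exact h w⟩
  set E := hcoer.continuousLinearEquivOfBilin with hE
  have hSE : (E : W →L[ℝ] W) = S := by
    ext v
    refine ext_inner_right ℝ fun w => ?_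
    rw [ContinuousLinearEquiv.coe_coe]
    rw [show ⟪E v, w⟫ = B v w from hcoer.continuousLinearEquivOfBilin_apply v w, hBapp]
  exact ⟨(ContinuousLinearEquiv.unitsEquiv ℝ W).symm E, hSE⟩

/-- The spectrum of `F*F` is nonnegative. -/
lemma aux_spectrum_nonneg {U V : Type*} [NormedAddCommGroup U] [InnerProductSpace ℝ U]
    [CompleteSpace U] [NormedAddCommGroup V] [InnerProductSpace ℝ V] [CompleteSpace V]
    (F : U →L[ℝ] V) {x : ℝ} (hx : x ∈ spectrum ℝ ((adjoint F).comp F)) : 0 ≤ x := by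
  by_contra hneg
  push_neg at hneg
  set T := (adjoint F).comp F with hT
  have hunit : IsUnit (T - algebraMap ℝ (U →L[ℝ] U) x) := by
    refine aux_isUnit_of_coercive _ (C := -x) (by linarith) fun w => ?_
    have h1 : ((T - algebraMap ℝ (U →L[ℝ] U) x) w) = T w - x • w := by
      simp [Algebra.algebraMap_eq_smul_one]
    have h2 : ⟪T w, w⟫ = ‖F w‖ ^ 2 := by
      rw [hT, ContinuousLinearMap.comp_apply, adjoint_inner_left, real_inner_self_eq_norm_sq]
    rw [h1, inner_sub_left, h2, real_inner_smul_left, real_inner_self_eq_norm_sq]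
    nlinarith [sq_nonneg ‖F w‖, sq_nonneg ‖w‖]
  have : IsUnit (algebraMap ℝ (U →L[ℝ] U) x - T) := by
    simpa [neg_sub] using hunit.neg
  exact spectrum.notMem_iff.mpr this hx

/-- `Φ g` is a positive operator when `g ≥ 0`. -/
lemma aux_pos {W : Type*} [NormedAddCommGroup W] [InnerProductSpace ℝ W] [CompleteSpace W]
    {T : W →L[ℝ] W} (Φ : C(spectrum ℝ T, ℝ) →⋆ₐ[ℝ] (W →L[ℝ] W))
    (g : C(spectrum ℝ T, ℝ)) (hg : ∀ z, 0 ≤ g z) (u : W) :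
    0 ≤ ⟪Φ g u, u⟫ := by
  set h : C(spectrum ℝ T, ℝ) := ⟨fun z => Real.sqrt (g z), Real.continuous_sqrt.comp g.continuous⟩
    with hh'
  have hhh : h * h = g := ContinuousMap.ext fun z => Real.mul_self_sqrt (hg z)
  have hstar : star h = h := ContinuousMap.ext fun z => star_trivial _
  have hsa : adjoint (Φ h) = Φ h := by
    rw [← ContinuousLinearMap.star_eq_adjoint, ← map_star, hstar]
  have key := ContinuousLinearMap.adjoint_inner_left (Φ h) (Φ h u) u
  rw [hsa] at key
  have : ⟪Φ g u, u⟫ = ⟪Φ h u, Φ h u⟫ := by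
    rw [← hhh, map_mul, ContinuousLinearMap.mul_apply, real_inner_comm]
    exact key.symm
  rw [this]
  exact real_inner_self_nonneg

/-- scalar tangent-line inequality. -/
lemma aux_scalar {x t θ : ℝ} (hx : 0 ≤ x) (ht : 0 < t) (hθ0 : 0 ≤ θ) (hθ1 : θ ≤ 1) :
    x ^ θ ≤ θ * t ^ (θ - 1) * x + (1 - θ) * t ^ θ := by
  have h := Real.geom_mean_le_arith_mean2_weighted (w₁ := θ) (w₂ := 1 - θ) (p₁ := x) (p₂ := t) hθ0 (by linarith) hx ht.le (by ring)
  have htpow : (0:ℝ) < t ^ (θ - 1) := Real.rpow_pos_of_pos ht _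
  have h2 := mul_le_mul_of_nonneg_right h htpow.le
  have e1 : x ^ θ * t ^ (1 - θ) * t ^ (θ - 1) = x ^ θ := by
    rw [mul_assoc, ← Real.rpow_add ht]
    norm_num
  have htt : t * t ^ (θ - 1) = t ^ θ := by
    nth_rewrite 1 [← Real.rpow_one t]
    rw [← Real.rpow_add ht]; norm_num
  calc x ^ θ = x ^ θ * t ^ (1 - θ) * t ^ (θ - 1) := e1.symm
    _ ≤ (θ * x + (1 - θ) * t) * t ^ (θ - 1) := h2
    _ = θ * t ^ (θ - 1) * x + (1 - θ) * (t * t ^ (θ - 1)) := by ring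
    _ = θ * t ^ (θ - 1) * x + (1 - θ) * t ^ θ := by rw [htt]

set_option maxHeartbeats 1000000 in
/-- interpolation inequality `‖(F*F)^ν u‖ ≤ ‖F u‖^(2ν) ‖u‖^(1-2ν)`. -/
theorem interpolation_inequality
    {U V : Type*} [NormedAddCommGroup U] [InnerProductSpace ℝ U] [CompleteSpace U]
    [NormedAddCommGroup V] [InnerProductSpace ℝ V] [CompleteSpace V]
    (F : U →L[ℝ] V) (ν : ℝ) (hν0 : 0 ≤ ν) (hν1 : ν ≤ 1 / 2)
    (P : U →L[ℝ] U) (hP : IsFractionalPower ((adjoint F).comp F) ν P) (u : U) :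
    ‖P u‖ ≤ ‖F u‖ ^ (2 * ν) * ‖u‖ ^ (1 - 2 * ν) := by
  set θ := 2 * ν with hθ
  obtain ⟨Φ, -, hΦid, f, hf, hΦf⟩ := hP
  have hθ0 : 0 ≤ θ := by rw [hθ]; linarith
  have hθ1 : θ ≤ 1 := by rw [hθ]; linarith
  set a := ‖F u‖ ^ 2 with ha'
  set b := ‖u‖ ^ 2 with hb'
  have ha0 : 0 ≤ a := sq_nonneg _
  have hb0 : 0 ≤ b := sq_nonneg _
  have hPsa : adjoint P = P := by
    rw [← hΦf, ← ContinuousLinearMap.star_eq_adjoint, ← map_star]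
    congr 1
  have hTu : ⟪((adjoint F).comp F) u, u⟫ = a := by
    rw [ContinuousLinearMap.comp_apply, adjoint_inner_left, real_inner_self_eq_norm_sq]
  have hPu : ‖P u‖ ^ 2
      = ⟪Φ (f.restrict (spectrum ℝ ((adjoint F).comp F))
          * f.restrict (spectrum ℝ ((adjoint F).comp F))) u, u⟫ := by
    have key := ContinuousLinearMap.adjoint_inner_left P (P u) u
    rw [hPsa] at key
    rw [map_mul, hΦf, ContinuousLinearMap.mul_apply, real_inner_comm, ← key,
      real_inner_self_eq_norm_sq]
  -- main pointwise bound via positivity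
  have key : ∀ t : ℝ, 0 < t → ‖P u‖ ^ 2 ≤ θ * t ^ (θ - 1) * a + (1 - θ) * t ^ θ * b := by
    intro t ht
    set c₁ := θ * t ^ (θ - 1) with hc₁
    set c₂ := (1 - θ) * t ^ θ with hc₂
    set fσ := f.restrict (spectrum ℝ ((adjoint F).comp F)) with hfσ
    set g : C(spectrum ℝ ((adjoint F).comp F), ℝ) :=
      c₁ • (ContinuousMap.id ℝ).restrict (spectrum ℝ ((adjoint F).comp F))
        + c₂ • (1 : C(spectrum ℝ ((adjoint F).comp F), ℝ)) - fσ * fσ with hg'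
    have hgz : ∀ z : spectrum ℝ ((adjoint F).comp F), 0 ≤ g z := by
      intro z
      have hz : 0 ≤ (z : ℝ) := aux_spectrum_nonneg F z.2
      have h1 : fσ z = (z : ℝ) ^ ν := hf z z.2
      have h2 : (z : ℝ) ^ ν * (z : ℝ) ^ ν = (z : ℝ) ^ θ := by
        rcases eq_or_lt_of_le hν0 with hν | hν
        · simp [← hν, hθ]
        · rw [hθ, two_mul, Real.rpow_add' hz (by positivity)]
      have h3 : g z = c₁ * z + c₂ - (z : ℝ) ^ θ := by
        simp [hg', h1, h2, ContinuousMap.restrict_apply]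
      rw [h3, sub_nonneg]
      exact aux_scalar hz ht hθ0 hθ1
    have hpos := aux_pos Φ g hgz u
    have hΦg : Φ g = c₁ • ((adjoint F).comp F) + c₂ • (1 : U →L[ℝ] U) - Φ (fσ * fσ) := by
      rw [hg', map_sub, map_add, map_smul, map_smul, hΦid, map_one]
    rw [hΦg] at hpos
    have hexp : ⟪(c₁ • ((adjoint F).comp F) + c₂ • (1 : U →L[ℝ] U) - Φ (fσ * fσ)) u, u⟫
        = c₁ * a + c₂ * b - ⟪Φ (fσ * fσ) u, u⟫ := by
      rw [ContinuousLinearMap.sub_apply, ContinuousLinearMap.add_apply,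
        ContinuousLinearMap.smul_apply, ContinuousLinearMap.smul_apply,
        ContinuousLinearMap.one_apply, inner_sub_left, inner_add_left,
        real_inner_smul_left, real_inner_smul_left, hTu, real_inner_self_eq_norm_sq, ← hb']
    rw [hexp] at hpos
    rw [hPu, hc₁, hc₂] at *
    linarith
  -- conclude
  rcases eq_or_lt_of_le (norm_nonneg u) with hu | hu
  · have hu0 : u = 0 := by rw [← norm_eq_zero]; exact hu.symm
    have hPu0 : P u = 0 := by rw [hu0, map_zero]
    rw [hPu0, norm_zero]
    positivity
  · have hbpos : 0 < b := by rw [hb']; positivity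
    have hRHS : 0 ≤ ‖F u‖ ^ θ * ‖u‖ ^ (1 - θ) := by positivity
    refine le_of_pow_le_pow_left₀ two_ne_zero hRHS ?_
    have hsq : (‖F u‖ ^ θ * ‖u‖ ^ (1 - θ)) ^ 2 = a ^ θ * b ^ (1 - θ) := by
      rw [ha', hb', mul_pow, ← Real.rpow_natCast (‖F u‖ ^ θ) 2,
        ← Real.rpow_natCast (‖u‖ ^ (1 - θ)) 2,
        ← Real.rpow_mul (norm_nonneg _), ← Real.rpow_mul (norm_nonneg _),
        ← Real.rpow_natCast ‖F u‖ 2, ← Real.rpow_natCast ‖u‖ 2,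
        ← Real.rpow_mul (norm_nonneg _), ← Real.rpow_mul (norm_nonneg _)]
      norm_num
      rw [mul_comm θ 2, mul_comm (1 - θ) 2]
    rw [hsq]
    rcases eq_or_lt_of_le ha0 with hA0 | hApos
    · -- a = 0
      rcases eq_or_lt_of_le hθ0 with hθz | hθpos
      · -- θ = 0
        rw [← hθz, Real.rpow_zero, one_mul, sub_zero, Real.rpow_one]
        have h1 := key 1 one_pos
        rw [← hθz] at h1
        simpa [Real.one_rpow] using h1
      · -- θ > 0 : limit t → 0⁺
        have hθne : θ ≠ 0 := ne_of_gt hθpos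
        have hkey2 : ∀ t ∈ Set.Ioi (0:ℝ), ‖P u‖ ^ 2 ≤ (1 - θ) * t ^ θ * b := by
          intro t ht
          have h1 := key t ht
          rw [← hA0] at h1
          simpa using h1
        have htend : Filter.Tendsto (fun t : ℝ => (1 - θ) * t ^ θ * b)
            (nhdsWithin 0 (Set.Ioi 0)) (nhds 0) := by
          have h1 : ContinuousAt (fun t : ℝ => t ^ θ) 0 :=
            Real.continuousAt_rpow_const 0 θ (Or.inr hθ0)
          have h2 : ContinuousAt (fun t : ℝ => (1 - θ) * t ^ θ * b) 0 :=
            (continuousAt_const.mul h1).mul continuousAt_const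
          have h3 := h2.tendsto
          have h4 : (1 - θ) * (0:ℝ) ^ θ * b = 0 := by simp [Real.zero_rpow hθne]
          rw [h4] at h3
          exact h3.mono_left nhdsWithin_le_nhds
        have hle : ‖P u‖ ^ 2 ≤ 0 :=
          ge_of_tendsto htend (eventually_nhdsWithin_of_forall hkey2)
        rw [← hA0, Real.zero_rpow hθne, zero_mul]
        exact hle
    · -- a > 0
      have ht : 0 < a / b := div_pos hApos hbpos
      have h1 := key (a / b) ht
      have e : θ * (a / b) ^ (θ - 1) * a + (1 - θ) * (a / b) ^ θ * b = a ^ θ * b ^ (1 - θ) := by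
        have h2 : (a / b) ^ (θ - 1) * a = (a / b) ^ θ * b := by
          rw [show θ = (θ - 1) + 1 by ring, Real.rpow_add ht, Real.rpow_one]
          field_simp
          ring_nf
        have h3 : (a / b) ^ θ = a ^ θ / b ^ θ := Real.div_rpow ha0 hb0 θ
        have h4 : b / b ^ θ = b ^ (1 - θ) := by
          rw [Real.rpow_sub hbpos, Real.rpow_one]
        calc θ * (a / b) ^ (θ - 1) * a + (1 - θ) * (a / b) ^ θ * b
            = θ * ((a / b) ^ (θ - 1) * a) + (1 - θ) * ((a / b) ^ θ * b) := by ring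
          _ = (a / b) ^ θ * b := by rw [h2]; ring
          _ = a ^ θ * (b / b ^ θ) := by rw [h3]; ring
          _ = a ^ θ * b ^ (1 - θ) := by rw [h4]
      rw [e] at h1
      exact h1
end
end

section
/- Let U and V be real Hilbert spaces and F : U → V a bounded linear operator. Let 0 ≤ ν ≤ 1/2 and suppose ξ ∈ U satisfies ξ = (F*F)^ν ω for some ω ∈ U. Then for all u ∈ U, ⟨ξ, u⟩ ≤ ‖ω‖ · ‖Fu‖^(2ν) · ‖u‖^(1−2ν). -/
open ContinuousLinearMap
open scoped RealInnerProductSpace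

noncomputable section

set_option maxHeartbeats 1000000 in
/-- if `ξ = (F*F)^ν ω` then `⟪ξ, u⟫ ≤ ‖ω‖ ‖F u‖^(2ν) ‖u‖^(1-2ν)`. -/
theorem interpolation_inner
    {U V : Type*} [NormedAddCommGroup U] [InnerProductSpace ℝ U] [CompleteSpace U]
    [NormedAddCommGroup V] [InnerProductSpace ℝ V] [CompleteSpace V]
    (F : U →L[ℝ] V) (ν : ℝ) (hν0 : 0 ≤ ν) (hν1 : ν ≤ 1 / 2)
    (P : U →L[ℝ] U) (hP : IsFractionalPower ((adjoint F).comp F) ν P)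
    (ξ ω : U) (hξ : ξ = P ω) (u : U) :
    ⟪ξ, u⟫ ≤ ‖ω‖ * ‖F u‖ ^ (2 * ν) * ‖u‖ ^ (1 - 2 * ν) := by
  set T := (adjoint F).comp F with hT
  obtain ⟨Φ, -, hΦid, f, hf, hΦf⟩ := hP
  -- T is positive, so its spectrum is nonnegative
  have hTpos : T.IsPositive := by
    have := (isPositive_one (E := V)).adjoint_conj F
    simpa [one_def] using this
  have hspec : ∀ x ∈ spectrum ℝ T, (0:ℝ) ≤ x :=
    SpectrumRestricts.nnreal_iff.mp hTpos.spectrumRestricts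
  -- every Φ g is self-adjoint
  have hsa : ∀ g : C(spectrum ℝ T, ℝ), IsSelfAdjoint (Φ g) := by
    intro g
    have : star g = g := star_trivial g
    rw [IsSelfAdjoint, ← map_star, this]
  -- positivity
  have hpos : ∀ g : C(spectrum ℝ T, ℝ), (∀ x, 0 ≤ g x) → ∀ w : U, 0 ≤ ⟪(Φ g) w, w⟫ := by
    intro g hg w
    set h : C(spectrum ℝ T, ℝ) := ⟨fun x => Real.sqrt (g x),
      Real.continuous_sqrt.comp g.continuous⟩ with hh
    have hgh : g = h * h := by
      ext x
      simp [hh, Real.mul_self_sqrt (hg x)]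
    rw [hgh, map_mul]
    have h1 : (Φ h * Φ h) w = (Φ h) ((Φ h) w) := rfl
    rw [h1]
    have h2 : ⟪(Φ h) ((Φ h) w), w⟫ = ⟪(Φ h) w, (Φ h) w⟫ := (hsa h).isSymmetric ((Φ h) w) w
    rw [h2]
    exact real_inner_self_nonneg
  -- monotonicity
  have hmono : ∀ g₁ g₂ : C(spectrum ℝ T, ℝ), (∀ x, g₁ x ≤ g₂ x) → ∀ w : U,
      ⟪(Φ g₁) w, w⟫ ≤ ⟪(Φ g₂) w, w⟫ := by
    intro g₁ g₂ hle w
    have := hpos (g₂ - g₁) (fun x => by simpa using sub_nonneg.mpr (hle x)) w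
    rw [map_sub] at this
    simp only [sub_apply, inner_sub_left] at this
    linarith
  have hTuu : ⟪T u, u⟫ = ‖F u‖ ^ 2 := by
    rw [hT]
    simp only [coe_comp', Function.comp_apply]
    rw [adjoint_inner_left, real_inner_self_eq_norm_sq]
  have hξu : ⟪ξ, u⟫ = ⟪ω, P u⟫ := by
    rw [hξ, ← hΦf]
    exact (hsa (f.restrict (spectrum ℝ T))).isSymmetric ω u
  -- case ν = 0
  rcases eq_or_lt_of_le hν0 with h0 | h0
  · have hfr : f.restrict (spectrum ℝ T) = 1 := by
      ext x
      simp only [ContinuousMap.restrict_apply, ContinuousMap.one_apply]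
      rw [hf x x.2, ← h0, Real.rpow_zero]
    rw [hfr, map_one] at hΦf
    rw [hξu, ← hΦf]
    simp only [one_apply, ← h0, mul_zero, Real.rpow_zero, mul_one, sub_zero, Real.rpow_one]
    exact real_inner_le_norm ω u
  -- case ν > 0
  set p := 2 * ν with hp
  have hp0 : 0 < p := by rw [hp]; linarith
  have hp1 : p ≤ 1 := by rw [hp]; linarith
  -- case u = 0
  rcases eq_or_ne u 0 with rfl | hu
  · rw [inner_zero_right]
    positivity
  set a := ‖F u‖ ^ 2 with ha'
  set b := ‖u‖ ^ 2 with hb'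
  have ha : 0 ≤ a := by positivity
  have hb : 0 < b := by rw [hb']; exact pow_pos (norm_pos_iff.mpr hu) 2
  set fr := f.restrict (spectrum ℝ T) with hfr
  -- pointwise key estimate for each δ > 0
  have key1 : ∀ δ : ℝ, 0 < δ → ⟪(Φ (fr * fr)) u, u⟫ ≤ ((a + δ) / b) ^ p * b := by
    intro δ hδ
    set lam := (a + δ) / b with hlam'
    have hlam : 0 < lam := by positivity
    set c₁ := p * lam ^ (p - 1) with hc₁
    set c₂ := (1 - p) * lam ^ p with hc₂
    have hc₁0 : 0 ≤ c₁ := by positivity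
    have hc₂0 : 0 ≤ c₂ := by
      rw [hc₂]
      exact mul_nonneg (by linarith) (Real.rpow_nonneg hlam.le p)
    have hlp : lam ^ (p - 1) * lam = lam ^ p := by
      rw [← Real.rpow_add_one hlam.ne' (p - 1)]
      ring_nf
    set h : C(spectrum ℝ T, ℝ) :=
      c₁ • (ContinuousMap.id ℝ).restrict (spectrum ℝ T) + c₂ • 1 with hh
    have hle : ∀ x : spectrum ℝ T, (fr * fr) x ≤ h x := by
      intro x
      have hx0 : (0:ℝ) ≤ x := hspec x x.2
      have hlhs : (fr * fr) x = f x * f x := rfl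
      have hrhs : h x = c₁ * x + c₂ := by
        simp [hh, ContinuousMap.restrict_apply]
      rw [hlhs, hrhs, hf x x.2]
      rcases hx0.eq_or_lt with hx | hx
      · rw [← hx, Real.zero_rpow h0.ne']
        nlinarith
      · have hxp : (x:ℝ) ^ ν * (x:ℝ) ^ ν = (x:ℝ) ^ p := by
          rw [← Real.rpow_add hx]
          norm_num [hp]
          ring_nf
        rw [hxp]
        have amgm := Real.geom_mean_le_arith_mean2_weighted hp0.le
          (by linarith : (0:ℝ) ≤ 1 - p) hx.le hlam.le (by ring)
        have hmul := mul_le_mul_of_nonneg_right amgm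
          (Real.rpow_nonneg hlam.le (p - 1))
        have h3 : lam ^ (1 - p) * lam ^ (p - 1) = 1 := by
          rw [← Real.rpow_add hlam]
          norm_num
        calc (x:ℝ) ^ p = (x:ℝ) ^ p * (lam ^ (1 - p) * lam ^ (p - 1)) := by rw [h3, mul_one]
          _ = (x:ℝ) ^ p * lam ^ (1 - p) * lam ^ (p - 1) := by ring
          _ ≤ (p * x + (1 - p) * lam) * lam ^ (p - 1) := hmul
          _ = c₁ * x + (1 - p) * (lam ^ (p - 1) * lam) := by rw [hc₁]; ring
          _ = c₁ * x + c₂ := by rw [hlp, hc₂]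
    have hΦh : Φ h = c₁ • T + c₂ • (1 : U →L[ℝ] U) := by
      rw [hh, map_add, map_smul, map_smul, hΦid, map_one]
    have hinner : ⟪(Φ h) u, u⟫ = c₁ * a + c₂ * b := by
      rw [hΦh]
      simp only [add_apply, smul_apply, one_apply_eq_self, inner_add_left, real_inner_smul_left]
      rw [hTuu, real_inner_self_eq_norm_sq]
    have hbound : c₁ * a + c₂ * b ≤ lam ^ p * b := by
      have hab : lam * b = a + δ := by
        rw [hlam']
        field_simp
      have h4 : c₁ * a ≤ c₁ * (a + δ) := by nlinarith
      have h5 : c₁ * (a + δ) = p * (lam ^ p * b) := by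
        rw [hc₁, ← hab, ← hlp]; ring
      have h6 : c₂ * b = (1 - p) * (lam ^ p * b) := by rw [hc₂]; ring
      nlinarith
    calc ⟪(Φ (fr * fr)) u, u⟫ ≤ ⟪(Φ h) u, u⟫ := hmono _ _ hle u
      _ = c₁ * a + c₂ * b := hinner
      _ ≤ lam ^ p * b := hbound
  -- ‖P u‖ ^ 2 equals the quadratic form of fr * fr
  have key2 : ⟪(Φ (fr * fr)) u, u⟫ = ‖P u‖ ^ 2 := by
    rw [map_mul]
    have h1 : (Φ fr * Φ fr) u = (Φ fr) ((Φ fr) u) := rfl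
    have h2 : ⟪(Φ fr) ((Φ fr) u), u⟫ = ⟪(Φ fr) u, (Φ fr) u⟫ :=
      (hsa fr).isSymmetric ((Φ fr) u) u
    rw [h1, h2, hΦf, real_inner_self_eq_norm_sq]
  -- take the limit δ → 0⁺
  have keylim : ‖P u‖ ^ 2 ≤ (a / b) ^ p * b := by
    have hca : ContinuousAt (fun δ : ℝ => ((a + δ) / b) ^ p * b) 0 :=
      ContinuousAt.mul
        (ContinuousAt.rpow_const ((continuousAt_const.add continuousAt_id).div_const b)
          (Or.inr hp0.le)) continuousAt_const
    have htend : Filter.Tendsto (fun δ : ℝ => ((a + δ) / b) ^ p * b)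
        (nhdsWithin 0 (Set.Ioi 0)) (nhds ((a / b) ^ p * b)) := by
      have := hca.continuousWithinAt (s := Set.Ioi 0)
      simpa [ContinuousWithinAt] using this
    refine ge_of_tendsto htend ?_
    filter_upwards [self_mem_nhdsWithin] with δ hδ
    rw [← key2]
    exact key1 δ hδ
  -- rewrite the bound
  have hrw : (a / b) ^ p * b = (‖F u‖ ^ p * ‖u‖ ^ (1 - p)) ^ 2 := by
    have hbp : (0:ℝ) < b ^ p := Real.rpow_pos_of_pos hb p
    have e1 : (‖F u‖ ^ p) ^ 2 = a ^ p := by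
      rw [ha', ← Real.rpow_natCast (‖F u‖ ^ p) 2, ← Real.rpow_natCast ‖F u‖ 2,
        ← Real.rpow_mul (norm_nonneg _), ← Real.rpow_mul (norm_nonneg _)]
      norm_num [mul_comm]
    have e2 : (‖u‖ ^ (1 - p)) ^ 2 = b ^ (1 - p) := by
      rw [hb', ← Real.rpow_natCast (‖u‖ ^ (1 - p)) 2, ← Real.rpow_natCast ‖u‖ 2,
        ← Real.rpow_mul (norm_nonneg _), ← Real.rpow_mul (norm_nonneg _)]
      norm_num [mul_comm]
    have e3 : b ^ (1 - p) = b / b ^ p := by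
      rw [Real.rpow_sub hb, Real.rpow_one]
    rw [mul_pow, e1, e2, e3, Real.div_rpow ha hb.le]
    field_simp
  have hfinal : ‖P u‖ ≤ ‖F u‖ ^ p * ‖u‖ ^ (1 - p) := by
    have hR : 0 ≤ ‖F u‖ ^ p * ‖u‖ ^ (1 - p) := by positivity
    have := keylim.trans_eq hrw
    nlinarith [norm_nonneg (P u)]
  calc ⟪ξ, u⟫ = ⟪ω, P u⟫ := hξu
    _ ≤ ‖ω‖ * ‖P u‖ := real_inner_le_norm ω (P u)
    _ ≤ ‖ω‖ * (‖F u‖ ^ p * ‖u‖ ^ (1 - p)) :=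
        mul_le_mul_of_nonneg_left hfinal (norm_nonneg ω)
    _ = ‖ω‖ * ‖F u‖ ^ p * ‖u‖ ^ (1 - p) := by ring
end
end

section
/- Let U, V be real Hilbert spaces, F : U → V bounded linear, and R : U → ℝ ∪ {+∞} proper and convex. Let 0 ≤ ν ≤ 1/2, let u† satisfy Fu† = v†, and suppose ξ† = (F*F)^ν ω† is a subgradient of R at u† for some ω† ∈ U. Let ‖v† − v^δ‖ ≤ δ and let u_α^δ minimise T_α(u) = (1/2)‖Fu − v^δ‖² + α R(u). Then the Bregman distance satisfies D_{ξ†}(u_α^δ, u†) ≤ δ²/(2α) − (1/(2α))‖F u_α^δ − v^δ‖² + ‖ω†‖ · ‖F(u† − u_α^δ)‖^(2ν) · ‖u† − u_α^δ‖^(1−2ν). -/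
open ContinuousLinearMap
open scoped RealInnerProductSpace

noncomputable section

theorem frac_interp_aux
    {U V : Type*} [NormedAddCommGroup U] [InnerProductSpace ℝ U] [CompleteSpace U]
    [NormedAddCommGroup V] [InnerProductSpace ℝ V] [CompleteSpace V]
    (F : U →L[ℝ] V) (ν : ℝ) (hν0 : 0 ≤ ν) (hν1 : ν ≤ 1 / 2)
    (P T : U →L[ℝ] U)
    (hspec : ∀ c ∈ spectrum ℝ T, (0:ℝ) ≤ c)
    (hinner : ∀ y : U, ⟪y, T y⟫ = ‖F y‖ ^ 2)
    (Φ : C(spectrum ℝ T, ℝ) →⋆ₐ[ℝ] (U →L[ℝ] U))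
    (hΦid : Φ ((ContinuousMap.id ℝ).restrict (spectrum ℝ T)) = T)
    (f : C(ℝ, ℝ)) (hf : ∀ x ∈ spectrum ℝ T, f x = x ^ ν)
    (hfP : Φ (f.restrict (spectrum ℝ T)) = P) (x : U) :
    ‖P x‖ ≤ ‖F x‖ ^ (2 * ν) * ‖x‖ ^ (1 - 2 * ν) := by
  -- selfadjointness of images
  have hsa : ∀ g : C(spectrum ℝ T, ℝ), adjoint (Φ g) = Φ g := by
    intro g
    have h1 : star (Φ g) = Φ (star g) := (map_star Φ g).symm
    have h2 : star g = g := by ext t; simp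
    rw [← star_eq_adjoint, h1, h2]
  -- positivity
  have hpos : ∀ g : C(spectrum ℝ T, ℝ), (∀ s, 0 ≤ g s) → ∀ y : U, (0:ℝ) ≤ ⟪y, Φ g y⟫ := by
    intro g hg y
    set s : C(spectrum ℝ T, ℝ) := ⟨fun t => Real.sqrt (g t), Real.continuous_sqrt.comp g.continuous⟩
      with hs
    have hss : s * s = g := by
      ext t; simp [hs, Real.mul_self_sqrt (hg t)]
    have h1 : Φ g y = Φ s (Φ s y) := by
      rw [← hss, map_mul]; rfl
    rw [h1, ← adjoint_inner_left (Φ s), hsa s]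
    exact real_inner_self_nonneg
  -- key quadratic identity
  have hPx : ‖P x‖ ^ 2 = ⟪x, Φ (f.restrict (spectrum ℝ T) * f.restrict (spectrum ℝ T)) x⟫ := by
    rw [map_mul]
    have : (Φ (f.restrict (spectrum ℝ T)) * Φ (f.restrict (spectrum ℝ T))) x
        = P (P x) := by rw [hfP]; rfl
    rw [this, ← adjoint_inner_left P, ← hfP, hsa, hfP, real_inner_self_eq_norm_sq]
  -- bound for each lam > 0
  have key : ∀ lam : ℝ, 0 < lam →
      ‖P x‖ ^ 2 ≤ 2 * ν * lam ^ (2 * ν - 1) * ‖F x‖ ^ 2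
        + (1 - 2 * ν) * lam ^ (2 * ν) * ‖x‖ ^ 2 := by
    intro lam hlam
    set c₁ : ℝ := 2 * ν * lam ^ (2 * ν - 1) with hc₁
    set c₂ : ℝ := (1 - 2 * ν) * lam ^ (2 * ν) with hc₂
    set h : C(spectrum ℝ T, ℝ) :=
      c₁ • (ContinuousMap.id ℝ).restrict (spectrum ℝ T) + algebraMap ℝ _ c₂ with hh
    have hgh : ∀ t : spectrum ℝ T,
        (f.restrict (spectrum ℝ T) * f.restrict (spectrum ℝ T)) t ≤ h t := by
      intro t
      have ht0 : (0:ℝ) ≤ (t : ℝ) := hspec t t.2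
      have hft : f t = (t : ℝ) ^ (ν : ℝ) := hf t t.2
      have hsq : (f.restrict (spectrum ℝ T) * f.restrict (spectrum ℝ T)) t
          = (t : ℝ) ^ (2 * ν) := by
        simp only [ContinuousMap.mul_apply, ContinuousMap.restrict_apply, hft]
        rw [← sq, ← Real.rpow_natCast ((t:ℝ) ^ (ν:ℝ)) 2, ← Real.rpow_mul ht0]
        norm_num [mul_comm]
      have hht : h t = c₁ * (t:ℝ) + c₂ := by
        simp [hh, ContinuousMap.restrict_apply, Algebra.algebraMap_eq_smul_one]
      rw [hsq, hht]
      -- AM-GM : t^(2ν) * lam^(1-2ν) ≤ 2ν t + (1-2ν) lam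
      have hw : (t:ℝ) ^ (2*ν) * lam ^ (1 - 2*ν) ≤ 2*ν*(t:ℝ) + (1-2*ν)*lam := by
        have := Real.geom_mean_le_arith_mean2_weighted (by linarith : (0:ℝ) ≤ 2*ν)
          (by linarith : (0:ℝ) ≤ 1 - 2*ν) ht0 hlam.le (by ring)
        linarith [this]
      have hml : (0:ℝ) < lam ^ (2*ν - 1) := Real.rpow_pos_of_pos hlam _
      have h2 := mul_le_mul_of_nonneg_right hw hml.le
      have hll : lam * lam ^ (2*ν-1) = lam ^ (2*ν) := by
        nth_rewrite 1 [← Real.rpow_one lam]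
        rw [← Real.rpow_add hlam]; norm_num
      calc (t:ℝ) ^ (2*ν) = (t:ℝ) ^ (2*ν) * lam ^ (1 - 2*ν) * lam ^ (2*ν - 1) := by
            rw [mul_assoc, ← Real.rpow_add hlam]; norm_num
        _ ≤ (2*ν*(t:ℝ) + (1-2*ν)*lam) * lam ^ (2*ν - 1) := h2
        _ = c₁ * (t:ℝ) + c₂ := by rw [hc₁, hc₂, ← hll]; ring
    -- use positivity of Φ (h - g*g)
    have hmono : ⟪x, Φ (f.restrict (spectrum ℝ T) * f.restrict (spectrum ℝ T)) x⟫
        ≤ ⟪x, Φ h x⟫ := by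
      have := hpos (h - f.restrict (spectrum ℝ T) * f.restrict (spectrum ℝ T))
        (fun t => by simpa using sub_nonneg.mpr (hgh t)) x
      rw [map_sub] at this
      have h3 : (Φ h - Φ (f.restrict (spectrum ℝ T) * f.restrict (spectrum ℝ T))) x
          = Φ h x - Φ (f.restrict (spectrum ℝ T) * f.restrict (spectrum ℝ T)) x := rfl
      rw [h3, inner_sub_right] at this
      linarith
    have hΦh : ⟪x, Φ h x⟫ = c₁ * ‖F x‖ ^ 2 + c₂ * ‖x‖ ^ 2 := by
      rw [hh, map_add, map_smul, AlgHomClass.commutes, hΦid]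
      have : (c₁ • T + algebraMap ℝ (U →L[ℝ] U) c₂) x = c₁ • T x + c₂ • x := by
        simp [Algebra.algebraMap_eq_smul_one]
      rw [this, inner_add_right, real_inner_smul_right, real_inner_smul_right, hinner,
        real_inner_self_eq_norm_sq]
    rw [hPx]
    calc _ ≤ ⟪x, Φ h x⟫ := hmono
      _ = _ := by rw [hΦh]
  -- now optimize over lam
  set a := ‖F x‖ with hadef
  set b := ‖x‖ with hbdef
  have ha0 : 0 ≤ a := norm_nonneg _
  have hb0 : 0 ≤ b := norm_nonneg _
  have hPn : 0 ≤ ‖P x‖ := norm_nonneg _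
  have hrhs0 : 0 ≤ a ^ (2*ν) * b ^ (1-2*ν) :=
    mul_nonneg (Real.rpow_nonneg ha0 _) (Real.rpow_nonneg hb0 _)
  rcases eq_or_lt_of_le hb0 with hb | hb
  · -- x = 0
    have hx0 : x = 0 := norm_eq_zero.mp hb.symm
    simpa [hx0] using hrhs0
  rcases eq_or_lt_of_le ha0 with ha | ha
  · -- F x = 0
    rcases eq_or_lt_of_le hν0 with hν | hν
    · -- ν = 0
      have hk := key 1 one_pos
      rw [Real.one_rpow, Real.one_rpow] at hk
      have h1 : ‖P x‖ ^ 2 ≤ b ^ 2 := by rw [← hν] at hk; simpa using hk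
      have h2 : ‖P x‖ ≤ b := by
        nlinarith [hPn, hb0]
      calc ‖P x‖ ≤ b := h2
        _ = a ^ (2*ν) * b ^ (1-2*ν) := by
            rw [← hν, ← ha]
            norm_num
    · -- ν > 0 : take lam → 0⁺
      have h2ν : (0:ℝ) < 2*ν := by linarith
      have hlim : Filter.Tendsto (fun lam : ℝ => 2*ν*lam^(2*ν-1)*a^2 + (1-2*ν)*lam^(2*ν)*b^2)
          (nhdsWithin 0 (Set.Ioi 0)) (nhds 0) := by
        rw [← ha]
        have hc : Filter.Tendsto (fun lam : ℝ => lam ^ (2*ν)) (nhdsWithin 0 (Set.Ioi 0))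
            (nhds 0) := by
          have := (Real.continuousAt_rpow_const 0 (2*ν) (Or.inr h2ν.le)).continuousWithinAt
            (s := Set.Ioi 0)
          have h0 : (0:ℝ) ^ (2*ν) = 0 := Real.zero_rpow (ne_of_gt h2ν)
          simpa [ContinuousWithinAt, h0] using this
        have : Filter.Tendsto (fun lam : ℝ => (1-2*ν)*lam^(2*ν)*b^2)
            (nhdsWithin 0 (Set.Ioi 0)) (nhds 0) := by
          have := (hc.const_mul (1-2*ν)).mul_const (b^2)
          simpa using this
        simpa using this
      have hev : ∀ᶠ lam in nhdsWithin (0:ℝ) (Set.Ioi 0),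
          ‖P x‖ ^ 2 ≤ 2*ν*lam^(2*ν-1)*a^2 + (1-2*ν)*lam^(2*ν)*b^2 := by
        filter_upwards [self_mem_nhdsWithin] with lam hlam
        exact key lam hlam
      have hle : ‖P x‖ ^ 2 ≤ 0 := ge_of_tendsto hlim hev
      have hP0 : ‖P x‖ = 0 := by nlinarith [hPn]
      rw [hP0]
      exact hrhs0
  · -- main case: a > 0, b > 0
    set lam : ℝ := a ^ (2:ℝ) / b ^ (2:ℝ) with hlamdef
    have hlam : 0 < lam := div_pos (Real.rpow_pos_of_pos ha _) (Real.rpow_pos_of_pos hb _)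
    have hk := key lam hlam
    have elam : ∀ r : ℝ, lam ^ r = a ^ (2*r) * b ^ (-(2*r)) := by
      intro r
      rw [hlamdef, Real.div_rpow (Real.rpow_nonneg ha0 _) (Real.rpow_nonneg hb0 _),
        ← Real.rpow_mul ha0, ← Real.rpow_mul hb0, div_eq_mul_inv, ← Real.rpow_neg hb0]
    set A := Real.log a with hA
    set B := Real.log b with hB
    have hra : ∀ r : ℝ, a ^ r = Real.exp (A * r) := fun r => Real.rpow_def_of_pos ha r
    have hrb : ∀ r : ℝ, b ^ r = Real.exp (B * r) := fun r => Real.rpow_def_of_pos hb r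
    have ha2 : a ^ 2 = Real.exp (A * 2) := by
      rw [← Real.rpow_natCast a 2, hra]; norm_num
    have hb2 : b ^ 2 = Real.exp (B * 2) := by
      rw [← Real.rpow_natCast b 2, hrb]; norm_num
    have e1 : 2*ν*lam^(2*ν-1)*a^2
        = 2*ν*Real.exp (A*(2*(2*ν-1)) + B*(-(2*(2*ν-1))) + A*2) := by
      rw [elam, hra, hrb, ha2, ← Real.exp_add, mul_assoc, ← Real.exp_add]
    have e2 : (1-2*ν)*lam^(2*ν)*b^2
        = (1-2*ν)*Real.exp (A*(2*(2*ν)) + B*(-(2*(2*ν))) + B*2) := by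
      rw [elam, hra, hrb, hb2, ← Real.exp_add, mul_assoc, ← Real.exp_add]
    have e3 : (a ^ (2*ν) * b ^ (1-2*ν)) ^ 2
        = Real.exp (A*(4*ν) + B*(2-4*ν)) := by
      rw [hra, hrb, ← Real.exp_add, sq, ← Real.exp_add]
      congr 1; ring
    have hsum : 2*ν*lam^(2*ν-1)*a^2 + (1-2*ν)*lam^(2*ν)*b^2
        = (a ^ (2*ν) * b ^ (1-2*ν)) ^ 2 := by
      rw [e1, e2, e3,
        show A*(2*(2*ν-1)) + B*(-(2*(2*ν-1))) + A*2 = A*(4*ν) + B*(2-4*ν) by ring,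
        show A*(2*(2*ν)) + B*(-(2*(2*ν))) + B*2 = A*(4*ν) + B*(2-4*ν) by ring]
      ring
    rw [hsum] at hk
    nlinarith [hk, hPn, hrhs0]

/-- Bregman distance bound from the interpolation inequality. -/
theorem bregman_interpolation_bound
    {U V : Type*} [NormedAddCommGroup U] [InnerProductSpace ℝ U] [CompleteSpace U]
    [NormedAddCommGroup V] [InnerProductSpace ℝ V] [CompleteSpace V]
    (F : U →L[ℝ] V) (R : U → EReal) (hRbot : ∀ u, R u ≠ ⊥) (hconv : ErealConvexOn R)
    (ν : ℝ) (hν0 : 0 ≤ ν) (hν1 : ν ≤ 1 / 2)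
    (P : U →L[ℝ] U) (hP : IsFractionalPower ((adjoint F).comp F) ν P)
    (udag : U) (vdag vδ : V) (hud : F udag = vdag)
    (ωdag ξdag : U) (hξ : ξdag = P ωdag) (hsub : IsSubgradient R ξdag udag)
    (α δ : ℝ) (hα : 0 < α) (hδ : 0 < δ) (hnoise : ‖vdag - vδ‖ ≤ δ)
    (uαδ : U) (hmin : ∀ u, Tik F R α vδ uαδ ≤ Tik F R α vδ u) :
    Breg R ξdag uαδ udag
      ≤ ((δ ^ 2 / (2 * α) : ℝ) : EReal)
        - ((1 / (2 * α) * ‖F uαδ - vδ‖ ^ 2 : ℝ) : EReal)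
        + ((‖ωdag‖ * ‖F (udag - uαδ)‖ ^ (2 * ν) * ‖udag - uαδ‖ ^ (1 - 2 * ν) : ℝ) : EReal) := by
  obtain ⟨Φ, hΦc, hΦid, f, hf, hfP⟩ := hP
  have hspec : ∀ c ∈ spectrum ℝ ((adjoint F).comp F), (0:ℝ) ≤ c := by
    have h1 : ((adjoint F).comp F).IsPositive := by
      have := (isPositive_one (E := V) (𝕜 := ℝ)).adjoint_conj F
      simpa [ContinuousLinearMap.one_def] using this
    exact SpectrumRestricts.nnreal_iff.mp h1.spectrumRestricts
  have hinner : ∀ y : U, ⟪y, ((adjoint F).comp F) y⟫ = ‖F y‖ ^ 2 := by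
    intro y
    rw [comp_apply, adjoint_inner_right, real_inner_self_eq_norm_sq]
  have hinterp := frac_interp_aux F ν hν0 hν1 P _ hspec hinner Φ hΦid f hf hfP (udag - uαδ)
  -- P is self-adjoint
  have hsaP : adjoint P = P := by
    rw [← hfP, ← star_eq_adjoint]
    rw [← map_star]
    congr 1
  -- finiteness of R udag
  have hR2ne : R udag ≠ ⊤ := hsub.1.ne
  set r2 : ℝ := (R udag).toReal with hr2
  have hR2 : R udag = (r2 : EReal) := (EReal.coe_toReal hR2ne (hRbot udag)).symm
  -- finiteness of R uαδ
  have hR1ne : R uαδ ≠ ⊤ := by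
    intro hTop
    have h := hmin udag
    rw [Tik, Tik, hTop, hR2, EReal.coe_mul_top_of_pos (by exact_mod_cast hα)] at h
    rw [EReal.coe_add_top] at h
    rw [← EReal.coe_mul, ← EReal.coe_add] at h
    exact (EReal.coe_ne_top _) (top_le_iff.mp h)
  set r1 : ℝ := (R uαδ).toReal with hr1
  have hR1 : R uαδ = (r1 : EReal) := (EReal.coe_toReal hR1ne (hRbot uαδ)).symm
  -- real minimality inequality
  have h4 : (1:ℝ)/2 * ‖F uαδ - vδ‖ ^ 2 + α * r1 ≤ 1/2 * ‖F udag - vδ‖ ^ 2 + α * r2 := by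
    have h := hmin udag
    rw [Tik, Tik, hR1, hR2, ← EReal.coe_mul, ← EReal.coe_mul, ← EReal.coe_add,
      ← EReal.coe_add] at h
    exact EReal.coe_le_coe_iff.mp h
  -- inner product bound
  set ip : ℝ := ⟪ξdag, uαδ - udag⟫ with hip
  set W : ℝ := ‖ωdag‖ * ‖F (udag - uαδ)‖ ^ (2*ν) * ‖udag - uαδ‖ ^ (1 - 2*ν) with hW
  have hipb : -ip ≤ W := by
    have h1 : -ip = ⟪ξdag, udag - uαδ⟫ := by
      rw [hip, ← inner_neg_right]; congr 1; abel
    have h2 : (⟪ξdag, udag - uαδ⟫ : ℝ) = ⟪ωdag, P (udag - uαδ)⟫ := by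
      rw [hξ]
      calc (⟪P ωdag, udag - uαδ⟫ : ℝ) = ⟪adjoint P ωdag, udag - uαδ⟫ := by rw [hsaP]
        _ = ⟪ωdag, P (udag - uαδ)⟫ := adjoint_inner_left P (udag - uαδ) ωdag
    have h3 : (⟪ωdag, P (udag - uαδ)⟫ : ℝ) ≤ ‖ωdag‖ * ‖P (udag - uαδ)‖ :=
      real_inner_le_norm _ _
    have h5 : ‖ωdag‖ * ‖P (udag - uαδ)‖ ≤ W := by
      rw [hW, mul_assoc]
      exact mul_le_mul_of_nonneg_left hinterp (norm_nonneg _)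
    rw [h1, h2]; linarith
  -- noise bound
  have hm2 : ‖F udag - vδ‖ ^ 2 ≤ δ ^ 2 := by
    rw [hud]
    have := norm_nonneg (vdag - vδ)
    nlinarith
  -- real final inequality
  have hreal : r1 - r2 - ip
      ≤ δ ^ 2 / (2*α) - 1/(2*α) * ‖F uαδ - vδ‖ ^ 2 + W := by
    have hgoal' : α * (r1 - r2 - ip) ≤ δ^2/2 - ‖F uαδ - vδ‖^2/2 + α * W := by
      nlinarith [hipb, h4, hm2, hα]
    have h6 : r1 - r2 - ip ≤ (δ^2/2 - ‖F uαδ - vδ‖^2/2 + α * W)/α := by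
      rw [le_div_iff₀ hα]; linarith
    have h7 : (δ^2/2 - ‖F uαδ - vδ‖^2/2 + α * W)/α
        = δ ^ 2 / (2*α) - 1/(2*α) * ‖F uαδ - vδ‖ ^ 2 + W := by
      field_simp
    linarith [h7 ▸ h6]
  -- transfer to EReal
  rw [Breg, hR1, hR2, ← EReal.coe_sub, ← EReal.coe_sub,
    ← EReal.coe_sub, ← EReal.coe_add]
  exact EReal.coe_le_coe_iff.mpr hreal
end
end

section
/- (Basic convergence rates, estimate form.) Let U, V be real Hilbert spaces, F : U → V bounded linear, R : U → ℝ ∪ {+∞} proper and convex, and 0 < ν ≤ 1/2. Suppose ξ† = (F*F)^ν ω† is a subgradient of R at u†, where Fu† = v†. Fix M > 0. Then there exist constants C₂, C₃ > 0, depending only on ν, ‖ω†‖, and M, such that for all δ > 0, α > 0, every v^δ with ‖v† − v^δ‖ ≤ δ, and every minimiser u_α^δ of T_α(u) = (1/2)‖Fu − v^δ‖² + αR(u) satisfying ‖u_α^δ − u†‖ ≤ M, one has D_{ξ†}(u_α^δ, u†) ≤ δ²/(2α) + C₂ δ^(2ν) + C₃ α^(ν/(1−ν)). -/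
open ContinuousLinearMap
open scoped RealInnerProductSpace

noncomputable section

section AuxLemmas

private lemma young_sq (a e α : ℝ) (hα : 0 < α) :
    a * e ≤ e ^ 2 / (2 * α) + a ^ 2 * α / 2 := by
  have h2α : (0:ℝ) < 2 * α := by linarith
  have h : a * e ≤ (e ^ 2 + a ^ 2 * α ^ 2) / (2 * α) := by
    rw [le_div_iff₀ h2α]; nlinarith [sq_nonneg (e - a * α)]
  have h2 : (e ^ 2 + a ^ 2 * α ^ 2) / (2 * α) = e ^ 2 / (2 * α) + a ^ 2 * α / 2 := by
    field_simp
  rw [h2] at h; exact h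

private lemma rpow_tangent {ν t lam : ℝ} (hν0 : 0 < ν) (hν1 : ν ≤ 1/2) (ht : 0 ≤ t)
    (hlam : 0 < lam) :
    t ^ ν * t ^ ν ≤ 2 * ν * lam ^ (2*ν - 1) * t + (1 - 2*ν) * lam ^ (2*ν) := by
  have h2ν : (0:ℝ) ≤ 2 * ν := by linarith
  have h2ν1 : (0:ℝ) ≤ 1 - 2 * ν := by linarith
  have hgm := Real.geom_mean_le_arith_mean2_weighted h2ν h2ν1
      (div_nonneg ht hlam.le) zero_le_one (by ring)
  rw [Real.one_rpow, mul_one, mul_one] at hgm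
  have hlp : (0:ℝ) < lam ^ (2*ν) := Real.rpow_pos_of_pos hlam _
  have hmul := mul_le_mul_of_nonneg_left hgm hlp.le
  have ht2 : t ^ (2*ν) = t ^ ν * t ^ ν := by
    rw [show 2*ν = ν + ν by ring, Real.rpow_add' ht (by intro h; exact (by linarith : ν + ν ≠ 0) h)]
  have hL : lam ^ (2*ν) * (t / lam) ^ (2*ν) = t ^ ν * t ^ ν := by
    rw [Real.div_rpow ht hlam.le, ← ht2]; field_simp
  have hR : lam ^ (2*ν) * (2*ν*(t/lam) + (1 - 2*ν)) =
      2*ν*lam^(2*ν-1)*t + (1-2*ν)*lam^(2*ν) := by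
    rw [Real.rpow_sub hlam, Real.rpow_one]; field_simp
  rw [hL, hR] at hmul; exact hmul

private lemma rpow_subadd {x y p : ℝ} (hx : 0 ≤ x) (hy : 0 ≤ y) (hp : 0 ≤ p) (hp1 : p ≤ 1) :
    (x + y) ^ p ≤ x ^ p + y ^ p := by
  have h := NNReal.rpow_add_le_add_rpow x.toNNReal y.toNNReal hp hp1
  have hc : ((x.toNNReal + y.toNNReal : NNReal) : ℝ) = x + y := by
    push_cast [Real.coe_toNNReal _ hx, Real.coe_toNNReal _ hy]; ring
  calc (x+y)^p = (((x.toNNReal + y.toNNReal : NNReal) : ℝ))^p := by rw [hc]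
    _ = (((x.toNNReal + y.toNNReal) ^ p : NNReal) : ℝ) := by rw [← NNReal.coe_rpow]
    _ ≤ ((x.toNNReal ^ p + y.toNNReal ^ p : NNReal) : ℝ) := by exact_mod_cast h
    _ = x ^ p + y ^ p := by
        push_cast [NNReal.coe_rpow, Real.coe_toNNReal _ hx, Real.coe_toNNReal _ hy]; ring

private lemma le_sqrt_add {a b c : ℝ} (ha : 0 ≤ a) (hb : 0 ≤ b) (hc : 0 ≤ c)
    (h : a^2 ≤ b + c) : a ≤ Real.sqrt b + Real.sqrt c := by
  have h1 : a ≤ Real.sqrt (b + c) := by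
    rw [← Real.sqrt_sq ha]; exact Real.sqrt_le_sqrt h
  have h2 : Real.sqrt (b+c) ≤ Real.sqrt b + Real.sqrt c := by
    rw [← Real.sqrt_sq (by positivity : (0:ℝ) ≤ Real.sqrt b + Real.sqrt c)]
    apply Real.sqrt_le_sqrt
    nlinarith [Real.sq_sqrt hb, Real.sq_sqrt hc,
      mul_nonneg (Real.sqrt_nonneg b) (Real.sqrt_nonneg c)]
  linarith

variable {U V : Type*} [NormedAddCommGroup U] [InnerProductSpace ℝ U] [CompleteSpace U]
  [NormedAddCommGroup V] [InnerProductSpace ℝ V] [CompleteSpace V]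

private lemma fracpow_selfAdjoint {T P : U →L[ℝ] U} {ν : ℝ}
    (hP : IsFractionalPower T ν P) : adjoint P = P := by
  obtain ⟨Φ, -, -, f, -, hfP⟩ := hP
  rw [← hfP, ← ContinuousLinearMap.star_eq_adjoint, ← map_star, star_trivial]

private lemma fracpow_norm_sq_bound (F : U →L[ℝ] V) {ν : ℝ} (hν0 : 0 < ν) (hν1 : ν ≤ 1/2)
    {P : U →L[ℝ] U} (hP : IsFractionalPower ((adjoint F).comp F) ν P)
    (x : U) {lam : ℝ} (hlam : 0 < lam) :
    ‖P x‖ ^ 2 ≤ 2*ν*lam^(2*ν-1) * ‖F x‖^2 + (1-2*ν)*lam^(2*ν) * ‖x‖^2 := by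
  set T := (adjoint F).comp F with hTdef
  obtain ⟨Φ, -, hΦid, f, hf, hfP⟩ := hP
  have hTpos : T.IsPositive := by
    simpa [T, ContinuousLinearMap.one_def] using (isPositive_one (E := V)).adjoint_conj F
  have hspec : ∀ t ∈ spectrum ℝ T, (0:ℝ) ≤ t :=
    SpectrumRestricts.nnreal_iff.mp hTpos.spectrumRestricts
  have hsa : ∀ g : C(spectrum ℝ T, ℝ), adjoint (Φ g) = Φ g := fun g => by
    rw [← ContinuousLinearMap.star_eq_adjoint, ← map_star, star_trivial]
  have hpos : ∀ g : C(spectrum ℝ T, ℝ), 0 ≤ g → ∀ y : U, 0 ≤ ⟪(Φ g) y, y⟫ := by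
    intro g hg y
    set h : C(spectrum ℝ T, ℝ) :=
      ⟨fun t => Real.sqrt (g t), Real.continuous_sqrt.comp g.continuous⟩ with hh
    have hhg : h * h = g := by
      ext t
      simp only [ContinuousMap.mul_apply, hh, ContinuousMap.coe_mk]
      exact Real.mul_self_sqrt (by simpa using ContinuousMap.le_def.mp hg t)
    have key : ⟪(Φ g) y, y⟫ = ⟪(Φ h) y, (Φ h) y⟫ := by
      calc ⟪(Φ g) y, y⟫ = ⟪adjoint (Φ h) ((Φ h) y), y⟫ := by
            rw [hsa, ← ContinuousLinearMap.mul_apply, ← map_mul, hhg]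
        _ = ⟪(Φ h) y, (Φ h) y⟫ := adjoint_inner_left _ _ _
    rw [key]; exact real_inner_self_nonneg
  have hmono : ∀ g₁ g₂ : C(spectrum ℝ T, ℝ), g₁ ≤ g₂ → ∀ y : U,
      ⟪(Φ g₁) y, y⟫ ≤ ⟪(Φ g₂) y, y⟫ := by
    intro g₁ g₂ hg y
    have h0 := hpos (g₂ - g₁) (sub_nonneg.mpr hg) y
    rw [map_sub, ContinuousLinearMap.sub_apply, inner_sub_left] at h0
    linarith
  have hle : f.restrict (spectrum ℝ T) * f.restrict (spectrum ℝ T)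
      ≤ (2*ν*lam^(2*ν-1)) • (ContinuousMap.id ℝ).restrict (spectrum ℝ T)
        + ((1-2*ν)*lam^(2*ν)) • 1 := by
    rw [ContinuousMap.le_def]
    intro t
    have ht0 : (0:ℝ) ≤ (t : ℝ) := hspec t t.2
    simp only [ContinuousMap.mul_apply, ContinuousMap.restrict_apply, ContinuousMap.add_apply,
      ContinuousMap.smul_apply, ContinuousMap.one_apply, ContinuousMap.id_apply,
      smul_eq_mul, mul_one]
    rw [hf t t.2]
    exact rpow_tangent hν0 hν1 ht0 hlam
  have h1 := hmono _ _ hle x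
  have hPadj : adjoint P = P := by rw [← hfP]; exact hsa _
  have hLHS : ⟪(Φ (f.restrict (spectrum ℝ T) * f.restrict (spectrum ℝ T))) x, x⟫
      = ‖P x‖^2 := by
    rw [map_mul, hfP, ContinuousLinearMap.mul_apply]
    calc ⟪P (P x), x⟫ = ⟪adjoint P (P x), x⟫ := by rw [hPadj]
      _ = ⟪P x, P x⟫ := adjoint_inner_left _ _ _
      _ = ‖P x‖^2 := real_inner_self_eq_norm_sq _
  have hTx : ⟪T x, x⟫ = ‖F x‖^2 := by
    show ⟪adjoint F (F x), x⟫ = _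
    rw [adjoint_inner_left]
    exact real_inner_self_eq_norm_sq _
  have hRHS : ⟪(Φ ((2*ν*lam^(2*ν-1)) • (ContinuousMap.id ℝ).restrict (spectrum ℝ T)
        + ((1-2*ν)*lam^(2*ν)) • 1)) x, x⟫
      = 2*ν*lam^(2*ν-1) * ‖F x‖^2 + (1-2*ν)*lam^(2*ν) * ‖x‖^2 := by
    rw [map_add, map_smul, map_smul, hΦid, map_one, ContinuousLinearMap.add_apply,
      ContinuousLinearMap.smul_apply, ContinuousLinearMap.smul_apply,
      ContinuousLinearMap.one_apply, inner_add_left, real_inner_smul_left,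
      real_inner_smul_left, hTx, real_inner_self_eq_norm_sq]
  rw [hLHS, hRHS] at h1
  exact h1

end AuxLemmas

/-- basic convergence rates, estimate form. -/
theorem basic_rates_estimate
    {U V : Type*} [NormedAddCommGroup U] [InnerProductSpace ℝ U] [CompleteSpace U]
    [NormedAddCommGroup V] [InnerProductSpace ℝ V] [CompleteSpace V]
    (F : U →L[ℝ] V) (R : U → EReal) (hRbot : ∀ u, R u ≠ ⊥) (hconv : ErealConvexOn R)
    (ν : ℝ) (hν0 : 0 < ν) (hν1 : ν ≤ 1 / 2)
    (P : U →L[ℝ] U) (hP : IsFractionalPower ((adjoint F).comp F) ν P)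
    (udag : U) (vdag : V) (hud : F udag = vdag)
    (ωdag ξdag : U) (hξ : ξdag = P ωdag) (hsub : IsSubgradient R ξdag udag)
    (M : ℝ) (hM : 0 < M) :
    ∃ C₂ C₃ : ℝ, 0 < C₂ ∧ 0 < C₃ ∧
      ∀ δ α : ℝ, 0 < δ → 0 < α → ∀ vδ : V, ‖vdag - vδ‖ ≤ δ →
        ∀ uαδ : U, (∀ u, Tik F R α vδ uαδ ≤ Tik F R α vδ u) → ‖uαδ - udag‖ ≤ M →
          Breg R ξdag uαδ udag
            ≤ ((δ ^ 2 / (2 * α) + C₂ * δ ^ (2 * ν) + C₃ * α ^ (ν / (1 - ν)) : ℝ) : EReal) := by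
  obtain ⟨hRdfin, -⟩ := hsub
  refine ⟨‖ωdag‖ * Real.sqrt (2*ν) + ‖ωdag‖ * Real.sqrt (1 - 2*ν) * M + 1,
          ‖ωdag‖^2 * ν + ‖ωdag‖ * Real.sqrt (1 - 2*ν) * M + 1, by positivity, ?_, ?_⟩
  · have h1 : 0 ≤ ‖ωdag‖^2*ν := mul_nonneg (sq_nonneg _) hν0.le
    have h2 : 0 ≤ ‖ωdag‖ * Real.sqrt (1-2*ν) * M := by positivity
    linarith
  intro δ α hδ hα vδ hvδ u hmin hMle
  have h1ν : (0:ℝ) < 1 - ν := by linarith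
  -- extract real values of R
  have hrd : ((R udag).toReal : EReal) = R udag := EReal.coe_toReal hRdfin.ne (hRbot udag)
  set rd := (R udag).toReal with hrd_def
  have hRu_ne_top : R u ≠ ⊤ := by
    intro htop
    have h := hmin udag
    simp only [Tik] at h
    rw [htop, EReal.coe_mul_top_of_pos hα, EReal.coe_add_top, ← hrd,
      ← EReal.coe_mul, ← EReal.coe_add] at h
    exact EReal.coe_ne_top _ (top_le_iff.mp h)
  have hru : ((R u).toReal : EReal) = R u := EReal.coe_toReal hRu_ne_top (hRbot u)
  set ru := (R u).toReal with hru_def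
  -- real minimality inequality
  have hre : 1/2*‖F u - vδ‖^2 + α*ru ≤ 1/2*‖vdag - vδ‖^2 + α*rd := by
    have h := hmin udag
    simp only [Tik] at h
    rw [← hru, ← hrd, hud] at h
    exact_mod_cast h
  -- reduce the goal to a real inequality
  simp only [Breg]
  rw [← hru, ← hrd]
  have hgoal : ∀ G : ℝ, ru - rd - ⟪ξdag, u - udag⟫ ≤ G →
      ((ru : EReal) - (rd : EReal) - ((⟪ξdag, u - udag⟫ : ℝ) : EReal) ≤ ((G : ℝ) : EReal)) := by
    intro G hG
    exact_mod_cast hG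
  apply hgoal
  -- notation
  set z := u - udag with hz
  set e := ‖F u - vδ‖ with he
  have hαp : (0:ℝ) < α^(1/(1-ν)) := Real.rpow_pos_of_pos hα _
  have hδ2 : (0:ℝ) < δ^2 := by positivity
  set lam := δ^2 + α^(1/(1-ν)) with hlam_def
  have hlam : 0 < lam := by positivity
  set s1 := Real.sqrt (2*ν) with hs1
  set s2 := Real.sqrt (1-2*ν) with hs2
  set L1 := lam^(2*ν-1) with hL1
  set sL := Real.sqrt L1 with hsL
  set L2 := lam^ν with hL2
  set D1 := δ^(2*ν) with hD1
  set A1 := α^(ν/(1-ν)) with hA1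
  have hL1nn : 0 ≤ L1 := Real.rpow_nonneg hlam.le _
  have hs1sq : s1^2 = 2*ν := Real.sq_sqrt (by linarith)
  have hs2sq : s2^2 = 1 - 2*ν := Real.sq_sqrt (by linarith)
  have hsLsq : sL^2 = L1 := Real.sq_sqrt hL1nn
  have hD1nn : 0 ≤ D1 := Real.rpow_nonneg hδ.le _
  have hA1nn : 0 ≤ A1 := Real.rpow_nonneg hα.le _
  have hδ2e : δ^(2:ℝ) = δ^2 := by
    rw [show (2:ℝ) = ((2:ℕ):ℝ) by norm_num, Real.rpow_natCast]
  -- norm bound on P z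
  have hkey := fracpow_norm_sq_bound F hν0 hν1 hP z hlam
  have hxM2 : (1-2*ν)*lam^(2*ν)*‖z‖^2 ≤ (1-2*ν)*lam^(2*ν)*M^2 := by
    apply mul_le_mul_of_nonneg_left _
      (mul_nonneg (by linarith) (Real.rpow_nonneg hlam.le _))
    exact pow_le_pow_left₀ (norm_nonneg _) hMle 2
  have hlamL2 : lam^(2*ν) = L2^2 := by
    rw [hL2, ← Real.rpow_natCast (lam^ν) 2, ← Real.rpow_mul hlam.le]
    norm_num [mul_comm]
  have hb : Real.sqrt (2*ν*L1*‖F z‖^2) = s1*sL*‖F z‖ := by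
    rw [Real.sqrt_mul (mul_nonneg (by linarith) hL1nn) _,
      Real.sqrt_mul (by linarith : (0:ℝ) ≤ 2*ν) _, Real.sqrt_sq (norm_nonneg _)]
  have hcsq : Real.sqrt ((1-2*ν)*lam^(2*ν)*M^2) = s2*L2*M := by
    rw [Real.sqrt_mul (mul_nonneg (by linarith) (Real.rpow_nonneg hlam.le _)) _,
      Real.sqrt_mul (by linarith : (0:ℝ) ≤ 1-2*ν) _, Real.sqrt_sq hM.le,
      hlamL2, Real.sqrt_sq (Real.rpow_nonneg hlam.le _)]
  have hPz : ‖P z‖ ≤ s1*sL*‖F z‖ + s2*L2*M := by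
    have h := le_sqrt_add (norm_nonneg (P z))
      (by positivity : (0:ℝ) ≤ 2*ν*L1*‖F z‖^2)
      (mul_nonneg (mul_nonneg (by linarith) (Real.rpow_nonneg hlam.le _)) (sq_nonneg M))
      (le_trans hkey (add_le_add_right hxM2 _))
    rwa [hb, hcsq] at h
  -- bound on ‖F z‖
  have hFz : ‖F z‖ ≤ e + δ := by
    have hzz : F z = (F u - vδ) + (vδ - vdag) := by rw [hz, map_sub, hud]; abel
    calc ‖F z‖ = ‖(F u - vδ) + (vδ - vdag)‖ := by rw [hzz]
      _ ≤ ‖F u - vδ‖ + ‖vδ - vdag‖ := norm_add_le _ _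
      _ ≤ e + δ := add_le_add le_rfl (by rw [norm_sub_rev]; exact hvδ)
  -- inner product bound
  have hip : -⟪ξdag, z⟫ ≤ ‖ωdag‖ * ‖P z‖ := by
    rw [hξ]
    have hswap : ⟪P ωdag, z⟫ = ⟪ωdag, P z⟫ := by
      conv_lhs => rw [← fracpow_selfAdjoint hP]
      exact adjoint_inner_left _ _ _
    rw [hswap]
    have h1 := abs_real_inner_le_norm ωdag (P z)
    have h2 := neg_abs_le ⟪ωdag, P z⟫
    linarith [abs_nonneg ⟪ωdag, P z⟫, neg_le_abs ⟪ωdag, P z⟫]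
  -- rpow exponent estimates
  have hsLδ : sL * δ ≤ D1 := by
    have h1 : sL = lam ^ ((2*ν-1)/2) := by
      rw [hsL, hL1, Real.sqrt_eq_rpow, ← Real.rpow_mul hlam.le]
      congr 1; ring
    have h2 : lam ^ ((2*ν-1)/2) ≤ (δ^(2:ℝ)) ^ ((2*ν-1)/2) := by
      apply Real.rpow_le_rpow_of_nonpos (by rw [hδ2e]; exact hδ2) _ (by linarith)
      rw [hδ2e, hlam_def]; linarith
    have h3 : (δ^(2:ℝ)) ^ ((2*ν-1)/2) = δ^(2*ν-1) := by
      rw [← Real.rpow_mul hδ.le]; congr 1; ring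
    have h4 : δ^(2*ν-1) * δ = D1 := by
      calc δ^(2*ν-1) * δ = δ^(2*ν-1) * δ^(1:ℝ) := by rw [Real.rpow_one]
        _ = δ^(2*ν-1+1) := (Real.rpow_add hδ _ _).symm
        _ = D1 := by rw [hD1]; congr 1; ring
    calc sL * δ ≤ δ^(2*ν-1) * δ := by
          apply mul_le_mul_of_nonneg_right _ hδ.le
          rw [h1, ← h3]; exact h2
      _ = D1 := h4
  have hL1α : L1 * α ≤ A1 := by
    have h2 : L1 ≤ (α^(1/(1-ν))) ^ (2*ν-1) := by
      rw [hL1]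
      apply Real.rpow_le_rpow_of_nonpos hαp _ (by linarith)
      rw [hlam_def]; linarith
    have h3 : (α^(1/(1-ν))) ^ (2*ν-1) = α ^ ((1/(1-ν))*(2*ν-1)) :=
      (Real.rpow_mul hα.le _ _).symm
    have h4 : α ^ ((1/(1-ν))*(2*ν-1)) * α = A1 := by
      calc α ^ ((1/(1-ν))*(2*ν-1)) * α = α ^ ((1/(1-ν))*(2*ν-1)) * α^(1:ℝ) := by
            rw [Real.rpow_one]
        _ = α ^ ((1/(1-ν))*(2*ν-1) + 1) := (Real.rpow_add hα _ _).symm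
        _ = A1 := by
            rw [hA1]; congr 1
            field_simp
            ring
    calc L1 * α ≤ α ^ ((1/(1-ν))*(2*ν-1)) * α :=
          mul_le_mul_of_nonneg_right (h3 ▸ h2) hα.le
      _ = A1 := h4
  have hL2b : L2 ≤ D1 + A1 := by
    have h1 := rpow_subadd hδ2.le hαp.le hν0.le (by linarith : ν ≤ 1)
    have h2 : (δ^2 : ℝ)^ν = D1 := by
      rw [hD1, ← hδ2e, ← Real.rpow_mul hδ.le]
    have h3 : (α^(1/(1-ν)))^ν = A1 := by
      rw [hA1, ← Real.rpow_mul hα.le]; congr 1; field_simp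
    rw [hL2, hlam_def]
    exact le_of_le_of_eq h1 (by rw [h2, h3])
  -- complete the square
  have hyoung := young_sq (‖ωdag‖*s1*sL) e α hα
  have hsq_eq : (‖ωdag‖*s1*sL)^2*α/2 = ‖ωdag‖^2*ν*(L1*α) := by
    rw [mul_pow, mul_pow, hs1sq, hsLsq]; ring
  -- residual inequality
  have hvv : ‖vdag - vδ‖^2 ≤ δ^2 := pow_le_pow_left₀ (norm_nonneg _) hvδ 2
  have h6 : ru - rd ≤ δ^2/(2*α) - e^2/(2*α) := by
    rw [← sub_div, le_div_iff₀ (by positivity : (0:ℝ) < 2*α)]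
    linarith [hre, hvv]
  -- monotone products
  have h3' : ‖ωdag‖*s1*(sL*δ) ≤ ‖ωdag‖*s1*D1 :=
    mul_le_mul_of_nonneg_left hsLδ (by positivity)
  have h4' : ‖ωdag‖^2*ν*(L1*α) ≤ ‖ωdag‖^2*ν*A1 :=
    mul_le_mul_of_nonneg_left hL1α (mul_nonneg (sq_nonneg _) hν0.le)
  have h5' : ‖ωdag‖*s2*M*L2 ≤ ‖ωdag‖*s2*M*(D1+A1) :=
    mul_le_mul_of_nonneg_left hL2b (by positivity)
  have h2' : ‖ωdag‖*‖P z‖ ≤ ‖ωdag‖*(s1*sL*‖F z‖ + s2*L2*M) :=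
    mul_le_mul_of_nonneg_left hPz (norm_nonneg _)
  have h2'' : ‖ωdag‖*s1*sL*‖F z‖ ≤ ‖ωdag‖*s1*sL*(e+δ) := by
    apply mul_le_mul_of_nonneg_left hFz
    positivity
  linarith [hip, h2', h2'', h3', h4', h5', h6, hyoung, hsq_eq.le, hsq_eq.ge, hD1nn, hA1nn]
end
end

section
/- (Rates under p-convexity, estimate form.) Let U, V be real Hilbert spaces, F : U → V bounded linear, R : U → ℝ ∪ {+∞} proper and convex, p ≥ 1, and 0 < ν < 1/2. Suppose ξ† = (F*F)^ν ω† is a subgradient of R at u†, where Fu† = v†. Fix M > 0 and suppose R is p-convex at u† on the ball of radius M: there is C₀ > 0 with C₀‖w − u†‖^p ≤ D_{ξ†}(w, u†) for all w with ‖w − u†‖ ≤ M. Then there exist constants C₁, C₂ > 0 such that for all δ > 0, α > 0, every v^δ with ‖v† − v^δ‖ ≤ δ, and every minimiser u_α^δ of T_α(u) = (1/2)‖Fu − v^δ‖² + αR(u) with ‖u_α^δ − u†‖ ≤ M, one has D_{ξ†}(u_α^δ, u†) ≤ C₁·δ²/α + C₂·α^(pν/(p−1−pν+2ν)). -/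
open ContinuousLinearMap
open scoped RealInnerProductSpace

noncomputable section
set_option maxHeartbeats 1000000

lemma aux_pointwise {x ε ν : ℝ} (hx0 : 0 ≤ x) (hε : 0 < ε) (hν0 : 0 < ν) (hν1 : ν < 1/2) :
    x ^ (2*ν) ≤ ε ^ (2*ν) + ε ^ (2*ν-1) * x := by
  rcases le_or_gt x ε with hxε | hxε
  · have h1 : x ^ (2*ν) ≤ ε ^ (2*ν) := Real.rpow_le_rpow hx0 hxε (by linarith)
    have h2 : 0 ≤ ε ^ (2*ν-1) * x := mul_nonneg (Real.rpow_nonneg hε.le _) hx0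
    linarith
  · have hx : 0 < x := lt_trans hε hxε
    have h1 : x ^ (2*ν-1) ≤ ε ^ (2*ν-1) :=
      Real.rpow_le_rpow_of_nonpos hε hxε.le (by linarith)
    have h2 : x ^ (2*ν) = x ^ (2*ν-1) * x := by
      have h := Real.rpow_add hx (2*ν-1) 1
      rw [Real.rpow_one, sub_add_cancel] at h
      exact h
    rw [h2]
    have h3 : x ^ (2*ν-1) * x ≤ ε ^ (2*ν-1) * x := mul_le_mul_of_nonneg_right h1 hx0
    have h4 : 0 ≤ ε ^ (2*ν) := Real.rpow_nonneg hε.le _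
    linarith

lemma op_bound {U V : Type*} [NormedAddCommGroup U] [InnerProductSpace ℝ U] [CompleteSpace U]
    [NormedAddCommGroup V] [InnerProductSpace ℝ V] [CompleteSpace V]
    (F : U →L[ℝ] V) {ν : ℝ} (hν0 : 0 < ν) (hν1 : ν < 1/2)
    {P : U →L[ℝ] U} (hP : IsFractionalPower ((adjoint F).comp F) ν P) :
    (∀ x y : U, ⟪P x, y⟫ = ⟪x, P y⟫) ∧
      ∀ (e : U) (ε : ℝ), 0 < ε →
        ‖P e‖^2 ≤ ε^(2*ν) * ‖e‖^2 + ε^(2*ν-1) * ‖F e‖^2 := by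
  obtain ⟨Φ, -, hid, f, hf, hPf⟩ := hP
  have hstar : ∀ g : C(spectrum ℝ ((adjoint F).comp F), ℝ), adjoint (Φ g) = Φ g := by
    intro g
    rw [← star_eq_adjoint, ← map_star, star_trivial]
  have hsym : ∀ (g : C(spectrum ℝ ((adjoint F).comp F), ℝ)) (x y : U),
      ⟪(Φ g) x, y⟫ = ⟪x, (Φ g) y⟫ := by
    intro g x y
    conv_lhs => rw [← hstar g]
    rw [adjoint_inner_left]
  have hpos : ∀ g : C(spectrum ℝ ((adjoint F).comp F), ℝ), (∀ x, 0 ≤ g x) →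
      ∀ e : U, 0 ≤ ⟪(Φ g) e, e⟫ := by
    intro g hg e
    set s : C(spectrum ℝ ((adjoint F).comp F), ℝ) :=
      ⟨fun x => Real.sqrt (g x), Real.continuous_sqrt.comp g.continuous⟩ with hs
    have hss : s * s = g := by
      ext x
      exact Real.mul_self_sqrt (hg x)
    have h1 : Φ g = Φ s ∘L Φ s := by rw [← hss, map_mul]; rfl
    rw [h1]
    have h2 : (Φ s ∘L Φ s) e = (Φ s) ((Φ s) e) := rfl
    rw [h2, hsym s]
    exact real_inner_self_nonneg
  have hTpos : ((adjoint F).comp F).IsPositive := by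
    have := (ContinuousLinearMap.isPositive_one (E := V)).adjoint_conj F
    simpa [ContinuousLinearMap.one_def] using this
  have hspec : ∀ x : spectrum ℝ ((adjoint F).comp F), (0:ℝ) ≤ (x : ℝ) := by
    have h := hTpos.spectrumRestricts
    rw [SpectrumRestricts.nnreal_iff] at h
    exact fun x => h x x.2
  constructor
  · intro x y; rw [← hPf]; exact hsym _ x y
  intro e ε hε
  set f₁ : C(spectrum ℝ ((adjoint F).comp F), ℝ) := f.restrict (spectrum ℝ ((adjoint F).comp F)) with hf₁
  set idr : C(spectrum ℝ ((adjoint F).comp F), ℝ) :=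
    (ContinuousMap.id ℝ).restrict (spectrum ℝ ((adjoint F).comp F)) with hidr
  set g : C(spectrum ℝ ((adjoint F).comp F), ℝ) :=
    ε^(2*ν) • (1 : C(spectrum ℝ ((adjoint F).comp F), ℝ)) + ε^(2*ν-1) • idr - f₁ * f₁ with hg
  have hgnn : ∀ x, 0 ≤ g x := by
    intro x
    have hx0 : (0:ℝ) ≤ (x:ℝ) := hspec x
    have hfx : f₁ x = (x:ℝ) ^ ν := hf x x.2
    have hxx : (x:ℝ)^ν * (x:ℝ)^ν = (x:ℝ)^(2*ν) := by
      rw [show (2:ℝ)*ν = ν + ν by ring, Real.rpow_add' hx0 (by intro h; nlinarith)]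
    simp only [hg, ContinuousMap.sub_apply, ContinuousMap.add_apply, ContinuousMap.smul_apply,
      ContinuousMap.one_apply, smul_eq_mul, mul_one, ContinuousMap.mul_apply, hfx, hidr,
      ContinuousMap.coe_restrict, Function.comp_apply, ContinuousMap.id_apply, Set.domRestrict_apply]
    have := aux_pointwise hx0 hε hν0 hν1
    nlinarith [hxx, this]
  have hΦge : (Φ g) e = ε^(2*ν) • e + ε^(2*ν-1) • (((adjoint F).comp F) e) - P (P e) := by
    rw [hg, map_sub, map_add, map_smul, map_smul, map_one, hid, map_mul, hPf]
    simp [ContinuousLinearMap.sub_apply, ContinuousLinearMap.add_apply,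
      ContinuousLinearMap.smul_apply, ContinuousLinearMap.mul_apply]
  have hkey := hpos g hgnn e
  rw [hΦge] at hkey
  have hTe : ⟪((adjoint F).comp F) e, e⟫ = ‖F e‖^2 := by
    have h : ((adjoint F).comp F) e = adjoint F (F e) := rfl
    rw [h, adjoint_inner_left, real_inner_self_eq_norm_sq]
  have hPPe : ⟪P (P e), e⟫ = ‖P e‖^2 := by
    rw [← hPf, hsym, hPf, real_inner_self_eq_norm_sq]
  have hee2 : ⟪e, e⟫ = ‖e‖^2 := real_inner_self_eq_norm_sq e
  rw [inner_sub_left, inner_add_left, real_inner_smul_left, real_inner_smul_left,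
    hTe, hPPe, hee2] at hkey
  linarith

lemma scalar_rates (p ν C₀ ω : ℝ) (hp : 1 ≤ p) (hν0 : 0 < ν) (hν1 : ν < 1/2)
    (hC₀ : 0 < C₀) (hω : 0 ≤ ω) :
    ∃ C₂ : ℝ, 0 < C₂ ∧ ∀ δ α D dd ee : ℝ, 0 < δ → 0 < α → 0 ≤ D → 0 ≤ dd → 0 ≤ ee →
      C₀ * ee ^ p ≤ D →
      (∀ ε : ℝ, 0 < ε →
        1/2*dd^2 + α * D ≤ 1/2*δ^2 + α * ω * (ε ^ ν * ee + ε ^ (ν - 1/2) * (dd + δ))) →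
      D ≤ 2 * δ^2 / α + C₂ * α ^ (p*ν/(p-1-p*ν+2*ν)) := by
  have hp0 : (0:ℝ) < p := lt_of_lt_of_le one_pos hp
  rcases eq_or_lt_of_le hp with h1 | h1
  · -- p = 1
    subst h1
    have hθ : (1:ℝ)*ν/(1-1-1*ν+2*ν) = 1 := by
      rw [show (1:ℝ)-1-1*ν+2*ν = ν by ring, one_mul, div_self hν0.ne']
    have hκ : 0 < C₀/(2*(ω+1)) := by positivity
    set ε₀ : ℝ := (C₀/(2*(ω+1)))^(ν⁻¹) with hε₀def
    have hε₀ : 0 < ε₀ := Real.rpow_pos_of_pos hκ _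
    have hε₀ν : ε₀^ν = C₀/(2*(ω+1)) := by
      rw [hε₀def, ← Real.rpow_mul hκ.le, inv_mul_cancel₀ hν0.ne', Real.rpow_one]
    refine ⟨2*(ω*ε₀^(ν-1/2))^2 + 1, by positivity, ?_⟩
    intro δ α D dd ee hδ hα hD hdd hee hCee hyp
    have h := hyp ε₀ hε₀
    rw [Real.rpow_one] at hCee
    have hb1 : ω * ε₀^ν ≤ C₀/2 := by
      rw [hε₀ν, show ω * (C₀/(2*(ω+1))) = ω*C₀/(2*(ω+1)) by ring,
        div_le_div_iff₀ (by positivity) two_pos]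
      nlinarith
    have hb2 : ω * ε₀^ν * ee ≤ D/2 := by
      have hee' : ee ≤ D/C₀ := (le_div_iff₀ hC₀).2 (by linarith [hCee])
      calc ω * ε₀^ν * ee ≤ (C₀/2)*(D/C₀) :=
            mul_le_mul hb1 hee' hee (by positivity)
        _ = D/2 := by field_simp
    have main : α*D ≤ 2*δ^2 + 2*(ω*ε₀^(ν-1/2))^2*α^2 := by
      nlinarith [h, mul_le_mul_of_nonneg_left hb2 hα.le,
        sq_nonneg (dd - α*(ω*ε₀^(ν-1/2))), sq_nonneg (δ - α*(ω*ε₀^(ν-1/2)))]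
    rw [hθ, Real.rpow_one]
    have hfin : D*α ≤ (2*δ^2/α + (2*(ω*ε₀^(ν-1/2))^2 + 1)*α)*α := by
      rw [add_mul, div_mul_cancel₀ _ hα.ne']
      nlinarith [main, sq_nonneg α, hα.le]
    exact le_of_mul_le_mul_right hfin hα
  · -- 1 < p
    have hq : 0 < p - 1 - p*ν + 2*ν := by nlinarith
    have hp1 : (0:ℝ) < p - 1 := by linarith
    have hconj : p.HolderConjugate (p/(p-1)) := Real.HolderConjugate.conjExponent h1
    have hp'0 : 0 < p/(p-1) := div_pos hp0 hp1
    have hc2 : 0 < ((2/p)^(1/p))^(p/(p-1)) / (p/(p-1)) := by positivity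
    set c2 : ℝ := ((2/p)^(1/p))^(p/(p-1)) / (p/(p-1)) with hc2def
    set K0 : ℝ := ω / C₀^(1/p) with hK0def
    have hK0 : 0 ≤ K0 := by positivity
    refine ⟨2*c2*K0^(p/(p-1)) + 2*ω^2 + 1, by positivity, ?_⟩
    intro δ α D dd ee hδ hα hD hdd hee hCee hyp
    set θ : ℝ := p*ν/(p-1-p*ν+2*ν) with hθdef
    set ε : ℝ := α^((p-1)/(p-1-p*ν+2*ν)) with hεdef
    have hε : 0 < ε := Real.rpow_pos_of_pos hα _
    have h := hyp ε hε
    -- exponent identities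
    have e3 : ε^ν = α^((p-1)/(p-1-p*ν+2*ν)*ν) := by
      rw [hεdef, ← Real.rpow_mul hα.le]
    have hE1 : (ε^ν)^(p/(p-1)) = α^θ := by
      rw [e3, ← Real.rpow_mul hα.le]
      congr 1
      rw [hθdef]
      field_simp
    have e4 : ε^(ν-1/2) = α^((p-1)/(p-1-p*ν+2*ν)*(ν-1/2)) := by
      rw [hεdef, ← Real.rpow_mul hα.le]
    have hE2 : α * (ε^(ν-1/2))^2 = α^θ := by
      rw [e4]
      have e5 : α^((1:ℝ) + ((p-1)/(p-1-p*ν+2*ν)*(ν-1/2) + (p-1)/(p-1-p*ν+2*ν)*(ν-1/2)))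
          = α * (α^((p-1)/(p-1-p*ν+2*ν)*(ν-1/2)) * α^((p-1)/(p-1-p*ν+2*ν)*(ν-1/2))) := by
        rw [Real.rpow_add hα, Real.rpow_one, Real.rpow_add hα]
      calc α * (α^((p-1)/(p-1-p*ν+2*ν)*(ν-1/2)))^2
          = α * (α^((p-1)/(p-1-p*ν+2*ν)*(ν-1/2)) * α^((p-1)/(p-1-p*ν+2*ν)*(ν-1/2))) := by ring
        _ = α^((1:ℝ) + ((p-1)/(p-1-p*ν+2*ν)*(ν-1/2) + (p-1)/(p-1-p*ν+2*ν)*(ν-1/2))) := e5.symm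
        _ = α^θ := by
            congr 1
            rw [hθdef, div_mul_eq_mul_div, ← add_div, one_add_div hq.ne', div_left_inj' hq.ne']
            ring
    -- ee bound
    have hee' : ee ≤ D^(1/p) / C₀^(1/p) := by
      have hb1 : ee^p ≤ D/C₀ := (le_div_iff₀' hC₀).2 hCee
      have hb2 : (ee^p)^(1/p) ≤ (D/C₀)^(1/p) :=
        Real.rpow_le_rpow (Real.rpow_nonneg hee p) hb1 (by positivity)
      have hb3 : (ee^p)^(1/p) = ee := by
        rw [← Real.rpow_mul hee, mul_one_div_cancel hp0.ne', Real.rpow_one]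
      have hb4 : (D/C₀)^(1/p) = D^(1/p)/C₀^(1/p) := Real.div_rpow hD hC₀.le _
      rw [hb3, hb4] at hb2
      exact hb2
    -- Young's inequality step
    have hyoung : (K0 * ε^ν) * D^(1/p) ≤ D/2 + c2 * (K0 * ε^ν)^(p/(p-1)) := by
      have hann : (0:ℝ) ≤ (p/2)*D := by positivity
      have hbnn : (0:ℝ) ≤ (K0 * ε^ν) * (2/p)^(1/p) := by positivity
      have hy := Real.young_inequality_of_nonneg (Real.rpow_nonneg hann (1/p)) hbnn hconj
      have ha : (((p/2)*D)^(1/p))^p = (p/2)*D := by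
        rw [← Real.rpow_mul hann, one_div_mul_cancel hp0.ne', Real.rpow_one]
      have hab : ((p/2)*D)^(1/p) * ((K0 * ε^ν) * (2/p)^(1/p))
          = (K0 * ε^ν) * D^(1/p) := by
        rw [Real.mul_rpow (by positivity) hD]
        have h12 : (p/2)^(1/p) * (2/p)^(1/p) = 1 := by
          rw [← Real.mul_rpow (by positivity) (by positivity),
            show (p/2)*(2/p) = 1 by field_simp, Real.one_rpow]
        calc (p/2)^(1/p) * D^(1/p) * ((K0 * ε^ν) * (2/p)^(1/p))
            = ((p/2)^(1/p) * (2/p)^(1/p)) * ((K0 * ε^ν) * D^(1/p)) := by ring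
          _ = (K0 * ε^ν) * D^(1/p) := by rw [h12, one_mul]
      have hb : ((K0 * ε^ν) * (2/p)^(1/p))^(p/(p-1))
          = (K0 * ε^ν)^(p/(p-1)) * ((2/p)^(1/p))^(p/(p-1)) :=
        Real.mul_rpow (by positivity) (by positivity)
      rw [hab, ha, hb] at hy
      have hD2 : ((p/2)*D)/p = D/2 := by field_simp
      rw [hD2] at hy
      calc (K0 * ε^ν) * D^(1/p) ≤ D/2 + (K0 * ε^ν)^(p/(p-1)) * ((2/p)^(1/p))^(p/(p-1)) / (p/(p-1)) := hy
        _ = D/2 + c2 * (K0 * ε^ν)^(p/(p-1)) := by rw [hc2def]; ring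
    have hK1 : (K0 * ε^ν)^(p/(p-1)) = K0^(p/(p-1)) * α^θ := by
      rw [Real.mul_rpow hK0 (Real.rpow_nonneg hε.le _), hE1]
    have f1 : ω * ε^ν * ee ≤ D/2 + c2 * K0^(p/(p-1)) * α^θ := by
      have s1 : ω * ε^ν * ee ≤ ω * ε^ν * (D^(1/p)/C₀^(1/p)) :=
        mul_le_mul_of_nonneg_left hee' (by positivity)
      have s2 : ω * ε^ν * (D^(1/p)/C₀^(1/p)) = (K0 * ε^ν) * D^(1/p) := by
        rw [hK0def]; ring
      rw [s2] at s1
      calc ω * ε^ν * ee ≤ D/2 + c2 * (K0 * ε^ν)^(p/(p-1)) := le_trans s1 hyoung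
        _ = D/2 + c2 * K0^(p/(p-1)) * α^θ := by rw [hK1]; ring
    have G : α*D ≤ 2*δ^2 + 2*c2*K0^(p/(p-1))*(α*α^θ) + 2*ω^2*(α^2*(ε^(ν-1/2))^2) := by
      nlinarith [h, mul_le_mul_of_nonneg_left f1 hα.le,
        sq_nonneg (dd - α*(ω*ε^(ν-1/2))), sq_nonneg (δ - α*(ω*ε^(ν-1/2)))]
    have G' : α*D ≤ 2*δ^2 + (2*c2*K0^(p/(p-1)) + 2*ω^2)*(α*α^θ) := by
      have : α^2*(ε^(ν-1/2))^2 = α*(α*(ε^(ν-1/2))^2) := by ring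
      rw [this, hE2] at G
      linarith [G]
    have hfin : D*α ≤ (2*δ^2/α + (2*c2*K0^(p/(p-1)) + 2*ω^2 + 1)*α^θ)*α := by
      rw [add_mul, div_mul_cancel₀ _ hα.ne']
      nlinarith [G', mul_nonneg (Real.rpow_nonneg hα.le θ) hα.le]
    exact le_of_mul_le_mul_right hfin hα

/-- rates under p-convexity, estimate form. -/
theorem pconvex_rates_estimate
    {U V : Type*} [NormedAddCommGroup U] [InnerProductSpace ℝ U] [CompleteSpace U]
    [NormedAddCommGroup V] [InnerProductSpace ℝ V] [CompleteSpace V]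
    (F : U →L[ℝ] V) (R : U → EReal) (hRbot : ∀ u, R u ≠ ⊥) (hconv : ErealConvexOn R)
    (p ν : ℝ) (hp : 1 ≤ p) (hν0 : 0 < ν) (hν1 : ν < 1 / 2)
    (P : U →L[ℝ] U) (hP : IsFractionalPower ((adjoint F).comp F) ν P)
    (udag : U) (vdag : V) (hud : F udag = vdag)
    (ωdag ξdag : U) (hξ : ξdag = P ωdag) (hsub : IsSubgradient R ξdag udag)
    (M : ℝ) (hM : 0 < M) (C₀ : ℝ) (hC₀ : 0 < C₀)
    (hpconv : ∀ w : U, ‖w - udag‖ ≤ M →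
      ((C₀ * ‖w - udag‖ ^ p : ℝ) : EReal) ≤ Breg R ξdag w udag) :
    ∃ C₁ C₂ : ℝ, 0 < C₁ ∧ 0 < C₂ ∧
      ∀ δ α : ℝ, 0 < δ → 0 < α → ∀ vδ : V, ‖vdag - vδ‖ ≤ δ →
        ∀ uαδ : U, (∀ u, Tik F R α vδ uαδ ≤ Tik F R α vδ u) → ‖uαδ - udag‖ ≤ M →
          Breg R ξdag uαδ udag
            ≤ ((C₁ * δ ^ 2 / α + C₂ * α ^ (p * ν / (p - 1 - p * ν + 2 * ν)) : ℝ) : EReal) := by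
  obtain ⟨hPsym, hPb⟩ := op_bound F hν0 hν1 hP
  obtain ⟨C₂, hC₂pos, hscal⟩ := scalar_rates p ν C₀ ‖ωdag‖ hp hν0 hν1 hC₀ (norm_nonneg _)
  refine ⟨2, C₂, two_pos, hC₂pos, ?_⟩

  intro δ α hδ hα vδ hvδ uαδ hmin hball
  have hRdtop : R udag ≠ ⊤ := hsub.1.ne
  set rd : ℝ := (R udag).toReal with hrddef
  have hRdeq : R udag = (rd : EReal) := (EReal.coe_toReal hRdtop (hRbot udag)).symm
  have hTik := hmin udag
  have hRatop : R uαδ ≠ ⊤ := by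
    intro htop
    simp only [Tik, htop, hRdeq] at hTik
    rw [EReal.coe_mul_top_of_pos hα] at hTik
    rw [EReal.add_top_of_ne_bot (EReal.coe_ne_bot _)] at hTik
    rw [← EReal.coe_mul, ← EReal.coe_add] at hTik
    exact (EReal.coe_ne_top _) (top_le_iff.mp hTik)
  set ra : ℝ := (R uαδ).toReal with hradef
  have hRaeq : R uαδ = (ra : EReal) := (EReal.coe_toReal hRatop (hRbot uαδ)).symm
  have hmin2 : 1/2*‖F uαδ - vδ‖^2 + α*ra ≤ 1/2*‖F udag - vδ‖^2 + α*rd := by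
    have h0 := hmin udag
    rw [Tik, Tik, hRaeq, hRdeq, ← EReal.coe_mul, ← EReal.coe_mul, ← EReal.coe_add,
      ← EReal.coe_add, EReal.coe_le_coe_iff] at h0
    convert h0 using 2 <;> norm_num
  have hsubd : rd + ⟪ξdag, uαδ - udag⟫ ≤ ra := by
    have h0 := hsub.2 uαδ
    rw [hRdeq, hRaeq, ← EReal.coe_add, EReal.coe_le_coe_iff] at h0
    exact h0
  have hBreg : Breg R ξdag uαδ udag = ((ra - rd - ⟪ξdag, uαδ - udag⟫ : ℝ) : EReal) := by
    rw [Breg, hRaeq, hRdeq]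
    norm_cast
  have hpc := hpconv uαδ hball
  rw [hBreg, EReal.coe_le_coe_iff] at hpc
  rw [hBreg, EReal.coe_le_coe_iff]
  have hD0 : 0 ≤ ra - rd - ⟪ξdag, uαδ - udag⟫ := by linarith
  -- key inequality
  have hkey : ∀ ε : ℝ, 0 < ε →
      1/2*‖F uαδ - vδ‖^2 + α * (ra - rd - ⟪ξdag, uαδ - udag⟫)
        ≤ 1/2*δ^2 + α * ‖ωdag‖ * (ε ^ ν * ‖uαδ - udag‖ + ε ^ (ν - 1/2) * (‖F uαδ - vδ‖ + δ)) := by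
    intro ε hε
    have hA : (0:ℝ) ≤ ε^ν := Real.rpow_nonneg hε.le _
    have hB : (0:ℝ) ≤ ε^(ν-1/2) := Real.rpow_nonneg hε.le _
    have hPnorm : ‖P (uαδ - udag)‖ ≤ ε^ν * ‖uαδ - udag‖ + ε^(ν-1/2) * ‖F (uαδ - udag)‖ := by
      have h2 := hPb (uαδ - udag) ε hε
      rw [show (2:ℝ)*ν = ν+ν by ring, Real.rpow_add hε,
        show ν+ν-1 = (ν-1/2)+(ν-1/2) by ring, Real.rpow_add hε] at h2
      have h7 : ‖P (uαδ - udag)‖^2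
          ≤ (ε^ν * ‖uαδ - udag‖ + ε^(ν-1/2) * ‖F (uαδ - udag)‖)^2 := by
        nlinarith [h2, mul_nonneg (mul_nonneg hA (norm_nonneg (uαδ - udag)))
          (mul_nonneg hB (norm_nonneg (F (uαδ - udag))))]
      calc ‖P (uαδ - udag)‖ = Real.sqrt (‖P (uαδ - udag)‖^2) :=
            (Real.sqrt_sq (norm_nonneg _)).symm
        _ ≤ Real.sqrt ((ε^ν * ‖uαδ - udag‖ + ε^(ν-1/2) * ‖F (uαδ - udag)‖)^2) :=
            Real.sqrt_le_sqrt h7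
        _ = ε^ν * ‖uαδ - udag‖ + ε^(ν-1/2) * ‖F (uαδ - udag)‖ :=
            Real.sqrt_sq (by positivity)
    have hip : -⟪ξdag, uαδ - udag⟫ ≤ ‖ωdag‖ * ‖P (uαδ - udag)‖ := by
      have h3 : ⟪ξdag, uαδ - udag⟫ = ⟪ωdag, P (uαδ - udag)⟫ := by
        rw [hξ]; exact hPsym ωdag (uαδ - udag)
      rw [h3]
      have h4 := abs_real_inner_le_norm ωdag (P (uαδ - udag))
      have h5 := neg_abs_le (⟪ωdag, P (uαδ - udag)⟫ : ℝ)
      linarith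
    have hFe : ‖F (uαδ - udag)‖ ≤ ‖F uαδ - vδ‖ + δ := by
      have h6 : F (uαδ - udag) = (F uαδ - vδ) - (vdag - vδ) := by
        rw [map_sub, hud]; abel
      rw [h6]
      calc ‖(F uαδ - vδ) - (vdag - vδ)‖ ≤ ‖F uαδ - vδ‖ + ‖vdag - vδ‖ := norm_sub_le _ _
        _ ≤ ‖F uαδ - vδ‖ + δ := by linarith
    have hδ2 : ‖F udag - vδ‖^2 ≤ δ^2 := by
      rw [hud]
      exact pow_le_pow_left₀ (norm_nonneg _) hvδ 2
    have t1 : α*(-⟪ξdag, uαδ - udag⟫) ≤ α*(‖ωdag‖ * ‖P (uαδ - udag)‖) :=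
      mul_le_mul_of_nonneg_left hip hα.le
    have t2 : α*‖ωdag‖*‖P (uαδ - udag)‖
        ≤ α*‖ωdag‖*(ε^ν * ‖uαδ - udag‖ + ε^(ν-1/2) * ‖F (uαδ - udag)‖) :=
      mul_le_mul_of_nonneg_left hPnorm (by positivity)
    have t3 : α*‖ωdag‖*(ε^(ν-1/2)) * ‖F (uαδ - udag)‖
        ≤ α*‖ωdag‖*(ε^(ν-1/2)) * (‖F uαδ - vδ‖ + δ) :=
      mul_le_mul_of_nonneg_left hFe (by positivity)
    nlinarith [hmin2, hδ2, t1, t2, t3]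
  exact hscal δ α (ra - rd - ⟪ξdag, uαδ - udag⟫) ‖F uαδ - vδ‖ ‖uαδ - udag‖
    hδ hα hD0 (norm_nonneg _) (norm_nonneg _) hpc hkey
end
end

section
/- (Range identity for fractional powers.) Let U, V be real Hilbert spaces and F : U → V a bounded linear operator. For every μ with 0 ≤ μ ≤ 1/2, the range of (F*F)^(μ+1/2) equals the range of the composition F* ∘ (FF*)^μ; i.e., ξ ∈ U can be written as ξ = (F*F)^(μ+1/2) η for some η ∈ U if and only if ξ = F*((FF*)^μ ω) for some ω ∈ V. -/
open ContinuousLinearMap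
open scoped RealInnerProductSpace

noncomputable section

section AuxiliaryLemmas

variable {U V : Type*} [NormedAddCommGroup U] [InnerProductSpace ℝ U] [CompleteSpace U]
  [NormedAddCommGroup V] [InnerProductSpace ℝ V] [CompleteSpace V]

/-- Douglas range criterion. -/
theorem mem_range_clm_iff (B : V →L[ℝ] U) (ξ : U) :
    (∃ ω, ξ = B ω) ↔ ∃ c : ℝ, ∀ x : U, |⟪ξ, x⟫| ≤ c * ‖adjoint B x‖ := by
  constructor
  · rintro ⟨ω, rfl⟩
    refine ⟨‖ω‖, fun x => ?_⟩
    rw [← adjoint_inner_right]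
    exact abs_real_inner_le_norm _ _
  · rintro ⟨c, hc⟩
    set T : U →L[ℝ] V := adjoint B with hT
    have hc' : ∀ x : U, |⟪ξ, x⟫| ≤ (max c 0) * ‖T x‖ := fun x =>
      (hc x).trans (mul_le_mul_of_nonneg_right (le_max_left _ _) (norm_nonneg _))
    set c' := max c 0 with hc'def
    have hc'0 : 0 ≤ c' := le_max_right _ _
    set m : U →ₗ[ℝ] ℝ := (innerSL ℝ ξ : U →L[ℝ] ℝ).toLinearMap with hm
    have hker : LinearMap.ker (T : U →ₗ[ℝ] V) ≤ LinearMap.ker m := by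
      intro x hx
      have hx' : T x = 0 := hx
      have h2 := hc' x
      rw [hx', norm_zero, mul_zero] at h2
      simpa [hm, LinearMap.mem_ker] using abs_nonpos_iff.mp h2
    -- the functional on range T
    set Tl : U →ₗ[ℝ] V := (T : U →ₗ[ℝ] V) with hTl
    set φ₀ : LinearMap.range Tl →ₗ[ℝ] ℝ :=
      (Tl.ker.liftQ m hker).comp Tl.quotKerEquivRange.symm.toLinearMap with hφ₀
    have hφ₀eval : ∀ (x : U) (h : Tl x ∈ LinearMap.range Tl), φ₀ ⟨Tl x, h⟩ = ⟪ξ, x⟫ := by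
      intro x h
      have heq : Tl.quotKerEquivRange.symm ⟨Tl x, h⟩
          = (LinearMap.ker Tl).mkQ x := Tl.quotKerEquivRange_symm_apply_image x _
      simp only [hφ₀, LinearMap.comp_apply, LinearEquiv.coe_toLinearMap]
      rw [heq]
      simp [hm]
    have hφ₀bound : ∀ z : LinearMap.range Tl, ‖φ₀ z‖ ≤ c' * ‖z‖ := by
      intro z
      obtain ⟨x, hx⟩ := z.2
      have hzx : z = ⟨Tl x, LinearMap.mem_range_self Tl x⟩ := Subtype.ext hx.symm
      rw [hzx, hφ₀eval x _]
      exact hc' x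
    set φ₁ : LinearMap.range Tl →L[ℝ] ℝ := φ₀.mkContinuous c' hφ₀bound with hφ₁
    have hφ₁eval : ∀ (x : U) (h : Tl x ∈ LinearMap.range Tl), φ₁ ⟨Tl x, h⟩ = ⟪ξ, x⟫ := by
      intro x h; exact hφ₀eval x h
    set K : Submodule ℝ V := (LinearMap.range Tl).topologicalClosure with hK
    -- inclusion as CLM
    set e₀ : LinearMap.range Tl →ₗ[ℝ] K :=
      Submodule.inclusion (Submodule.le_topologicalClosure _) with he₀
    have he₀norm : ∀ z : LinearMap.range Tl, ‖e₀ z‖ = ‖z‖ := fun z => rfl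
    set e : LinearMap.range Tl →L[ℝ] K :=
      e₀.mkContinuous 1 (fun z => by rw [he₀norm z, one_mul]) with he
    have hiso : Isometry e := AddMonoidHomClass.isometry_of_norm e (fun z => rfl)
    have hdense : DenseRange e := by
      intro y
      rw [Metric.mem_closure_iff]
      intro ε hε
      have hy : (y : V) ∈ closure ((LinearMap.range Tl : Submodule ℝ V) : Set V) := by
        rw [← Submodule.topologicalClosure_coe]
        exact y.2
      rw [Metric.mem_closure_iff] at hy
      obtain ⟨w, hw, hdist⟩ := hy ε hε
      exact ⟨e ⟨w, hw⟩, ⟨⟨w, hw⟩, rfl⟩, by rwa [Subtype.dist_eq]⟩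
    set ψ : K →L[ℝ] ℝ := φ₁.extend e with hψ
    haveI : CompleteSpace K := Submodule.topologicalClosure.completeSpace (LinearMap.range Tl)
    set φ : V →L[ℝ] ℝ := ψ.comp (K.orthogonalProjectionOnto : V →L[ℝ] K) with hφ
    set ω : V := (InnerProductSpace.toDual ℝ V).symm φ with hω
    refine ⟨ω, ?_⟩
    have key : ∀ x : U, ⟪ξ, x⟫ = ⟪B ω, x⟫ := by
      intro x
      have h1 : ⟪B ω, x⟫ = ⟪ω, T x⟫ := by
        rw [hT, adjoint_inner_right]
      have hTxK : T x ∈ K := Submodule.le_topologicalClosure _ (LinearMap.mem_range_self Tl x)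
      have h2 : ⟪ω, T x⟫ = φ (T x) := InnerProductSpace.toDual_symm_apply
      have h3 : K.orthogonalProjectionOnto (T x) = ⟨T x, hTxK⟩ :=
        Submodule.orthogonalProjectionOnto_mem_subspace_eq_self (⟨T x, hTxK⟩ : K)
      have h4 : φ (T x) = ψ ⟨T x, hTxK⟩ := by
        rw [hφ, ContinuousLinearMap.comp_apply, h3]
      have h5 : ψ ⟨T x, hTxK⟩ = φ₁ ⟨Tl x, LinearMap.mem_range_self Tl x⟩ := by
        have he5 : e ⟨Tl x, LinearMap.mem_range_self Tl x⟩ = ⟨T x, hTxK⟩ := rfl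
        rw [← he5, hψ]
        exact ContinuousLinearMap.extend_eq φ₁ hdense hiso.isUniformInducing _
      rw [h1, h2, h4, h5, hφ₁eval x]
    exact ext_inner_right ℝ key


/-- spectrum of a positive operator is nonneg -/
theorem spectrum_nonneg_of_inner_nonneg {W : Type*} [NormedAddCommGroup W]
    [InnerProductSpace ℝ W] [CompleteSpace W] (T : W →L[ℝ] W)
    (hpos : ∀ u, 0 ≤ ⟪T u, u⟫) : ∀ lam ∈ spectrum ℝ T, 0 ≤ lam := by
  intro lam hlam
  by_contra hneg
  push_neg at hneg
  apply spectrum.notMem_iff.mpr _ hlam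
  set ν : NNReal := ⟨-lam, by linarith⟩ with hν
  have hc : (0 : NNReal) < ν := by
    simp only [← NNReal.coe_lt_coe, NNReal.coe_zero, hν]
    show (0:ℝ) < -lam
    linarith
  refine isUnit_of_forall_le_norm_inner_map _ hc ?_
  intro x
  have h1 : ⟪(algebraMap ℝ (W →L[ℝ] W) lam - T) x, x⟫ = lam * ‖x‖ ^ 2 - ⟪T x, x⟫ := by
    simp [Algebra.algebraMap_eq_smul_one, inner_sub_left, real_inner_smul_left,
      real_inner_self_eq_norm_sq, mul_comm]
  rw [Real.norm_eq_abs, h1]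
  have h2 : lam * ‖x‖ ^ 2 - ⟪T x, x⟫ ≤ lam * ‖x‖ ^ 2 := by linarith [hpos x]
  have h3 : lam * ‖x‖ ^ 2 ≤ 0 := by nlinarith [sq_nonneg ‖x‖]
  have hν' : (ν : ℝ) = -lam := rfl
  rw [hν', abs_of_nonpos (by linarith)]
  nlinarith [hpos x, sq_nonneg ‖x‖]

theorem myConjPow_pt (F : U →L[ℝ] V) (n : ℕ) (x : U) :
    adjoint F (((F.comp (adjoint F)) ^ n) (F x)) = (((adjoint F).comp F) ^ (n + 1)) x := by
  induction n generalizing x with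
  | zero => simp
  | succ n ih =>
    have h1 : ((F.comp (adjoint F)) ^ (n + 1)) (F x)
        = ((F.comp (adjoint F)) ^ n) ((F.comp (adjoint F)) (F x)) := by
      rw [pow_succ, ContinuousLinearMap.mul_apply]
    have h2 : (F.comp (adjoint F)) (F x) = F ((((adjoint F).comp F)) x) := rfl
    rw [h1, h2, ih]
    conv_rhs => rw [pow_succ]
    rfl

theorem myConjPow (F : U →L[ℝ] V) (n : ℕ) :
    (adjoint F).comp (((F.comp (adjoint F)) ^ n).comp F) = ((adjoint F).comp F) ^ (n + 1) := by
  ext x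
  exact myConjPow_pt F n x

set_option maxHeartbeats 1000000 in
theorem intertwine (F : U →L[ℝ] V)
    (Φ : C(spectrum ℝ ((adjoint F).comp F), ℝ) →⋆ₐ[ℝ] (U →L[ℝ] U)) (hΦc : Continuous Φ)
    (hΦid : Φ ((ContinuousMap.id ℝ).restrict (spectrum ℝ ((adjoint F).comp F)))
      = (adjoint F).comp F)
    (Ψ : C(spectrum ℝ (F.comp (adjoint F)), ℝ) →⋆ₐ[ℝ] (V →L[ℝ] V)) (hΨc : Continuous Ψ)
    (hΨid : Ψ ((ContinuousMap.id ℝ).restrict (spectrum ℝ (F.comp (adjoint F))))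
      = F.comp (adjoint F))
    (q : C(ℝ, ℝ)) :
    Φ (((ContinuousMap.id ℝ) * q).restrict (spectrum ℝ ((adjoint F).comp F)))
      = (adjoint F).comp ((Ψ (q.restrict (spectrum ℝ (F.comp (adjoint F))))).comp F) := by
  have hσ : spectrum ℝ ((adjoint F).comp F) = spectrum ℝ ((adjoint F).comp F) := rfl
  set S : Set ℝ := spectrum ℝ ((adjoint F).comp F) ∪ spectrum ℝ (F.comp (adjoint F)) with hS
  haveI : CompactSpace S := by
    rw [← isCompact_iff_compactSpace]
    exact (spectrum.isCompact ((adjoint F).comp F)).union (spectrum.isCompact (F.comp (adjoint F)))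
  set ι₁ : C(spectrum ℝ ((adjoint F).comp F), S) := ⟨Set.inclusion Set.subset_union_left,
    continuous_inclusion Set.subset_union_left⟩ with hι₁
  set ι₂ : C(spectrum ℝ (F.comp (adjoint F)), S) := ⟨Set.inclusion Set.subset_union_right,
    continuous_inclusion Set.subset_union_right⟩ with hι₂
  set idr : C(spectrum ℝ ((adjoint F).comp F), ℝ) :=
    (ContinuousMap.id ℝ).restrict (spectrum ℝ ((adjoint F).comp F)) with hidr
  have hΛ₁c : Continuous (fun h : C(S, ℝ) => Φ (idr * (h.comp ι₁))) := by
    have hmul : Continuous (fun h : C(S, ℝ) => idr * h.comp ι₁) :=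
      continuous_const.mul (ContinuousMap.continuous_precomp ι₁)
    exact hΦc.comp hmul
  have hΛ₂c : Continuous (fun h : C(S, ℝ) =>
      (adjoint F).comp ((Ψ (h.comp ι₂)).comp F)) := by
    apply Continuous.clm_comp continuous_const
    apply Continuous.clm_comp _ continuous_const
    exact hΨc.comp (ContinuousMap.continuous_precomp ι₂)
  have heq : (fun h : C(S, ℝ) => Φ (idr * (h.comp ι₁)))
      = (fun h : C(S, ℝ) => (adjoint F).comp ((Ψ (h.comp ι₂)).comp F)) := by
    have hdense : Dense ((polynomialFunctions S : Set C(S, ℝ))) := by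
      rw [dense_iff_closure_eq, ← Subalgebra.topologicalClosure_coe,
        polynomialFunctions.topologicalClosure S]
      rfl
    refine Continuous.ext_on hdense hΛ₁c hΛ₂c ?_
    intro h hh
    rw [polynomialFunctions_coe] at hh
    obtain ⟨p, rfl⟩ := hh
    -- reduce to polynomials
    have hcomp₁ : ∀ r : Polynomial ℝ, ((Polynomial.toContinuousMapOnAlgHom S) r).comp ι₁
        = r.toContinuousMapOn (spectrum ℝ ((adjoint F).comp F)) := fun r => by ext x; rfl
    have hcomp₂ : ∀ r : Polynomial ℝ, ((Polynomial.toContinuousMapOnAlgHom S) r).comp ι₂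
        = r.toContinuousMapOn (spectrum ℝ (F.comp (adjoint F))) := fun r => by ext x; rfl
    have hmulX : ∀ r : Polynomial ℝ,
        idr * r.toContinuousMapOn (spectrum ℝ ((adjoint F).comp F))
        = (Polynomial.X * r).toContinuousMapOn (spectrum ℝ ((adjoint F).comp F)) := fun r => by
      ext x; simp [hidr]
    set A₁ : Polynomial ℝ →ₐ[ℝ] (U →L[ℝ] U) :=
      Φ.toAlgHom.comp (Polynomial.toContinuousMapOnAlgHom (spectrum ℝ ((adjoint F).comp F)))
      with hA₁
    set A₂ : Polynomial ℝ →ₐ[ℝ] (V →L[ℝ] V) :=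
      Ψ.toAlgHom.comp (Polynomial.toContinuousMapOnAlgHom (spectrum ℝ (F.comp (adjoint F))))
      with hA₂
    have hA₁X : A₁ Polynomial.X = (adjoint F).comp F := by
      have : (Polynomial.X : Polynomial ℝ).toContinuousMapOn (spectrum ℝ ((adjoint F).comp F))
          = (ContinuousMap.id ℝ).restrict (spectrum ℝ ((adjoint F).comp F)) := by ext x; simp
      simp only [hA₁, AlgHom.comp_apply, Polynomial.toContinuousMapOnAlgHom_apply]
      rw [this]
      exact hΦid
    have hA₂X : A₂ Polynomial.X = F.comp (adjoint F) := by
      have : (Polynomial.X : Polynomial ℝ).toContinuousMapOn (spectrum ℝ (F.comp (adjoint F)))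
          = (ContinuousMap.id ℝ).restrict (spectrum ℝ (F.comp (adjoint F))) := by ext x; simp
      simp only [hA₂, AlgHom.comp_apply, Polynomial.toContinuousMapOnAlgHom_apply]
      rw [this]
      exact hΨid
    show Φ (idr * ((Polynomial.toContinuousMapOnAlgHom S) p).comp ι₁)
        = (adjoint F).comp ((Ψ (((Polynomial.toContinuousMapOnAlgHom S) p).comp ι₂)).comp F)
    rw [hcomp₁, hcomp₂, hmulX]
    have key : ∀ r : Polynomial ℝ,
        A₁ (Polynomial.X * r) = (adjoint F).comp ((A₂ r).comp F) := by
      intro r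
      induction r using Polynomial.induction_on' with
      | add r s hr hs =>
        rw [mul_add, map_add, map_add, hr, hs, ContinuousLinearMap.add_comp,
          ContinuousLinearMap.comp_add]
      | monomial n a =>
        rw [← Polynomial.smul_X_eq_monomial, mul_smul_comm, map_smul, map_smul,
          ← pow_succ', map_pow, map_pow, hA₁X, hA₂X,
          ContinuousLinearMap.smul_comp, ContinuousLinearMap.comp_smul, myConjPow]
    exact key p
  have happ := congrFun heq (q.restrict S)
  have h1 : (q.restrict S).comp ι₁ = q.restrict (spectrum ℝ ((adjoint F).comp F)) := by ext x; rfl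
  have h2 : (q.restrict S).comp ι₂ = q.restrict (spectrum ℝ (F.comp (adjoint F))) := by ext x; rfl
  have h3 : idr * q.restrict (spectrum ℝ ((adjoint F).comp F))
      = ((ContinuousMap.id ℝ) * q).restrict (spectrum ℝ ((adjoint F).comp F)) := by ext x; rfl
  rw [h1, h2, h3] at happ
  exact happ

theorem norm_adjoint_apply_sq {W X : Type*} [NormedAddCommGroup W] [InnerProductSpace ℝ W]
    [CompleteSpace W] [NormedAddCommGroup X] [InnerProductSpace ℝ X] [CompleteSpace X]
    (A : X →L[ℝ] W) (x : W) : ‖adjoint A x‖ ^ 2 = ⟪x, A (adjoint A x)⟫ := by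
  rw [← real_inner_self_eq_norm_sq, adjoint_inner_left]

end AuxiliaryLemmas

set_option maxHeartbeats 1000000 in
/-- range identity `ran (F*F)^(μ+1/2) = ran (F* ∘ (FF*)^μ)`. -/
theorem range_identity_fractional_powers
    {U V : Type*} [NormedAddCommGroup U] [InnerProductSpace ℝ U] [CompleteSpace U]
    [NormedAddCommGroup V] [InnerProductSpace ℝ V] [CompleteSpace V]
    (F : U →L[ℝ] V) (μ : ℝ) (hμ0 : 0 ≤ μ) (hμ1 : μ ≤ 1 / 2)
    (P : U →L[ℝ] U) (hP : IsFractionalPower ((adjoint F).comp F) (μ + 1 / 2) P)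
    (Q : V →L[ℝ] V) (hQ : IsFractionalPower (F.comp (adjoint F)) μ Q)
    (ξ : U) :
    (∃ η : U, ξ = P η) ↔ (∃ ω : V, ξ = adjoint F (Q ω)) := by
  obtain ⟨Φ, hΦc, hΦid, f, hf, hfP⟩ := hP
  obtain ⟨Ψ, hΨc, hΨid, g, hg, hgQ⟩ := hQ
  -- spectra are nonnegative
  have hspec₁ : ∀ x ∈ spectrum ℝ ((adjoint F).comp F), (0:ℝ) ≤ x := by
    apply spectrum_nonneg_of_inner_nonneg
    intro u
    have : ⟪((adjoint F).comp F) u, u⟫ = ⟪F u, F u⟫ := by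
      rw [ContinuousLinearMap.comp_apply, adjoint_inner_left]
    rw [this]
    exact real_inner_self_nonneg
  have hspec₂ : ∀ x ∈ spectrum ℝ (F.comp (adjoint F)), (0:ℝ) ≤ x := by
    apply spectrum_nonneg_of_inner_nonneg
    intro u
    have : ⟪(F.comp (adjoint F)) u, u⟫ = ⟪adjoint F u, adjoint F u⟫ := by
      rw [ContinuousLinearMap.comp_apply, adjoint_inner_right]
    rw [this]
    exact real_inner_self_nonneg
  -- the auxiliary function  x ↦ |x| ^ (2 μ)
  set q : C(ℝ, ℝ) := ⟨fun x => |x| ^ (2 * μ),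
    Continuous.rpow_const continuous_abs (fun x => Or.inr (by positivity))⟩ with hq
  have hq₂ : ∀ x ∈ spectrum ℝ (F.comp (adjoint F)), q x = g x * g x := by
    intro x hx
    have hx0 : 0 ≤ x := hspec₂ x hx
    rw [hg x hx, hq]
    show |x| ^ (2 * μ) = x ^ μ * x ^ μ
    rw [abs_of_nonneg hx0]
    rcases hx0.eq_or_lt with h | h
    · subst h
      by_cases hμ : μ = 0
      · simp [hμ]
      · rw [Real.zero_rpow (by positivity), Real.zero_rpow hμ, mul_zero]
    · rw [two_mul, Real.rpow_add h]
  have hq₁ : ∀ x ∈ spectrum ℝ ((adjoint F).comp F), x * q x = f x * f x := by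
    intro x hx
    have hx0 : 0 ≤ x := hspec₁ x hx
    rw [hf x hx, hq]
    show x * |x| ^ (2 * μ) = x ^ (μ + 1/2) * x ^ (μ + 1/2)
    rw [abs_of_nonneg hx0]
    rcases hx0.eq_or_lt with h | h
    · subst h
      rw [Real.zero_rpow (by positivity : (μ + 1/2 : ℝ) ≠ 0), mul_zero, zero_mul]
    · rw [← Real.rpow_add h,
        show x * x ^ (2*μ) = x ^ (1 + 2*μ) from by rw [Real.rpow_add h, Real.rpow_one]]
      congr 1
      ring
  -- the operator identity P ∘ P = F* ∘ Q ∘ Q ∘ F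
  have hrestr₁ : ((ContinuousMap.id ℝ) * q).restrict (spectrum ℝ ((adjoint F).comp F))
      = (f * f).restrict (spectrum ℝ ((adjoint F).comp F)) := by
    ext x
    exact hq₁ x x.2
  have hrestr₂ : q.restrict (spectrum ℝ (F.comp (adjoint F)))
      = (g * g).restrict (spectrum ℝ (F.comp (adjoint F))) := by
    ext x
    exact hq₂ x x.2
  have hint := intertwine F Φ hΦc hΦid Ψ hΨc hΨid q
  rw [hrestr₁, hrestr₂] at hint
  have hff : (f * f).restrict (spectrum ℝ ((adjoint F).comp F))
      = f.restrict (spectrum ℝ ((adjoint F).comp F))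
        * f.restrict (spectrum ℝ ((adjoint F).comp F)) := ContinuousMap.ext fun x => rfl
  have hgg : (g * g).restrict (spectrum ℝ (F.comp (adjoint F)))
      = g.restrict (spectrum ℝ (F.comp (adjoint F)))
        * g.restrict (spectrum ℝ (F.comp (adjoint F))) := ContinuousMap.ext fun x => rfl
  rw [hff, hgg, map_mul, map_mul, hfP, hgQ] at hint
  -- hint : P * P = (adjoint F).comp ((Q * Q).comp F)
  -- self-adjointness
  have hPsa : adjoint P = P := by
    rw [← ContinuousLinearMap.star_eq_adjoint, ← hfP, ← map_star]
    congr 1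
  have hQsa : adjoint Q = Q := by
    rw [← ContinuousLinearMap.star_eq_adjoint, ← hgQ, ← map_star]
    congr 1
  set B : V →L[ℝ] U := (adjoint F).comp Q with hB
  have hBadj : adjoint B = Q.comp F := by
    rw [hB, ContinuousLinearMap.adjoint_comp, adjoint_adjoint, hQsa]
  -- norms of adjoints agree
  have hnorm : ∀ x : U, ‖adjoint P x‖ = ‖adjoint B x‖ := by
    intro x
    have h1 : ‖adjoint P x‖ ^ 2 = ⟪x, (P * P) x⟫ := by
      rw [norm_adjoint_apply_sq P x, hPsa]
      rfl
    have h2 : ‖adjoint B x‖ ^ 2 = ⟪x, (P * P) x⟫ := by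
      rw [norm_adjoint_apply_sq B x, hint]
      congr 1
      rw [hBadj, hB]
      rfl
    have h3 : ‖adjoint P x‖ ^ 2 = ‖adjoint B x‖ ^ 2 := by rw [h1, h2]
    nlinarith [norm_nonneg (adjoint P x), norm_nonneg (adjoint B x)]
  -- conclude via the Douglas criterion
  have hPrange := mem_range_clm_iff P ξ
  have hBrange := mem_range_clm_iff B ξ
  have hiff : (∃ ω : V, ξ = adjoint F (Q ω)) ↔ (∃ ω : V, ξ = B ω) := by
    constructor <;> rintro ⟨ω, rfl⟩
    · exact ⟨ω, rfl⟩
    · exact ⟨ω, rfl⟩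
  rw [hiff, hPrange, hBrange]
  constructor <;> rintro ⟨c, hc⟩ <;> refine ⟨c, fun x => ?_⟩
  · rw [← hnorm x]; exact hc x
  · rw [hnorm x]; exact hc x
end
end

section
/- (Key dual estimate for higher-order rates.) Let U, V be real Hilbert spaces, F : U → V bounded linear, R : U → ℝ ∪ {+∞} proper and convex, α > 0, δ > 0. Suppose ξ† = F*ω† is a subgradient of R at u† for some ω† ∈ V, with Fu† = v† and ‖v† − v^δ‖ ≤ δ. Let u_α^δ be a minimiser of T_α(u) = (1/2)‖Fu − v^δ‖² + αR(u) with R(u_α^δ) < +∞, set ω_α^δ := −(1/α)(F u_α^δ − v^δ) and ξ_α^δ := F* ω_α^δ. Then ⟨ξ_α^δ − ξ†, u_α^δ − u†⟩ ≤ −α‖ω_α^δ − ω†‖² − α⟨ω_α^δ − ω†, ω†⟩ + δ‖ω_α^δ − ω†‖. -/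
open ContinuousLinearMap
open scoped RealInnerProductSpace

noncomputable section

/-- key dual estimate for higher-order rates. -/
theorem dual_estimate
    {U V : Type*} [NormedAddCommGroup U] [InnerProductSpace ℝ U] [CompleteSpace U]
    [NormedAddCommGroup V] [InnerProductSpace ℝ V] [CompleteSpace V]
    (F : U →L[ℝ] V) (R : U → EReal) (hRbot : ∀ u, R u ≠ ⊥) (hconv : ErealConvexOn R)
    (α δ : ℝ) (hα : 0 < α) (hδ : 0 < δ)
    (udag : U) (vdag vδ : V) (hud : F udag = vdag) (hnoise : ‖vdag - vδ‖ ≤ δ)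
    (ωdag : V) (ξdag : U) (hξ : ξdag = adjoint F ωdag) (hsub : IsSubgradient R ξdag udag)
    (uαδ : U) (hmin : ∀ u, Tik F R α vδ uαδ ≤ Tik F R α vδ u) (hfin : R uαδ < ⊤)
    (ωαδ : V) (hω : ωαδ = -(1 / α) • (F uαδ - vδ))
    (ξαδ : U) (hξα : ξαδ = adjoint F ωαδ) :
    ⟪ξαδ - ξdag, uαδ - udag⟫
      ≤ -α * ‖ωαδ - ωdag‖ ^ 2 - α * ⟪ωαδ - ωdag, ωdag⟫ + δ * ‖ωαδ - ωdag‖ := by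

  have hα' : α ≠ 0 := ne_of_gt hα
  have hF : F (uαδ - udag) = (-α) • (ωαδ - ωdag) + ((-α) • ωdag + (vδ - vdag)) := by
    rw [map_sub, hud, hω, smul_sub, smul_smul]
    have : -α * -(1 / α) = 1 := by field_simp
    rw [this]
    module
  have key : ⟪ξαδ - ξdag, uαδ - udag⟫
      = -α * ‖ωαδ - ωdag‖ ^ 2 - α * ⟪ωαδ - ωdag, ωdag⟫ + ⟪ωαδ - ωdag, vδ - vdag⟫ := by
    rw [hξα, hξ, ← map_sub, adjoint_inner_left, hF]
    rw [inner_add_right, inner_add_right, real_inner_smul_right, real_inner_smul_right,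
      real_inner_self_eq_norm_sq]
    ring
  rw [key]
  have hcs : ⟪ωαδ - ωdag, vδ - vdag⟫ ≤ δ * ‖ωαδ - ωdag‖ := by
    calc ⟪ωαδ - ωdag, vδ - vdag⟫ ≤ ‖ωαδ - ωdag‖ * ‖vδ - vdag‖ := real_inner_le_norm _ _
    _ ≤ ‖ωαδ - ωdag‖ * δ := by
        refine mul_le_mul_of_nonneg_left ?_ (norm_nonneg _)
        rwa [← norm_neg, neg_sub]
    _ = δ * ‖ωαδ - ωdag‖ := mul_comm _ _
  linarith
end
end

section
/- (Classical rates for quadratic Tikhonov regularisation.) Let U, V be real Hilbert spaces and F : U → V bounded linear. Let u† = (F*F)^ν ω for some ω ∈ U and 0 < ν ≤ 1, set v† = Fu†, fix c > 0, and choose α(δ) = c·δ^(2/(2ν+1)). Then there exists C > 0 such that for every δ > 0 and every v^δ with ‖v† − v^δ‖ ≤ δ, the (unique) Tikhonov-regularised solution u_α^δ = (F*F + α(δ)·I)⁻¹ F* v^δ satisfies ‖u_α^δ − u†‖ ≤ C·δ^(2ν/(2ν+1)). -/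
open ContinuousLinearMap
open scoped RealInnerProductSpace

noncomputable section

section AuxLemmas

variable {U : Type*} [NormedAddCommGroup U] [InnerProductSpace ℝ U] [CompleteSpace U]

lemma aux_isUnit (T : U →L[ℝ] U) (hpos : ∀ u, 0 ≤ ⟪T u, u⟫) {β : ℝ} (hβ : 0 < β) :
    IsUnit (T + β • (1 : U →L[ℝ] U)) := by
  refine isUnit_of_forall_le_norm_inner_map _ (c := β.toNNReal)
    (by simpa using hβ) fun x => ?_
  have h1 : ⟪(T + β • (1 : U →L[ℝ] U)) x, x⟫ = ⟪T x, x⟫ + β * ‖x‖ ^ 2 := by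
    simp [inner_add_left, real_inner_smul_left, real_inner_self_eq_norm_sq]
  have h2 := hpos x
  rw [h1]
  rw [Real.norm_eq_abs, Real.coe_toNNReal _ hβ.le]
  rw [abs_of_nonneg (by positivity)]
  nlinarith [sq_nonneg ‖x‖]

lemma aux_spectrum_nonneg_s15 (T : U →L[ℝ] U) (hpos : ∀ u, 0 ≤ ⟪T u, u⟫) :
    ∀ μ ∈ spectrum ℝ T, 0 ≤ μ := by
  intro μ hμ
  by_contra hlt
  push_neg at hlt
  rw [spectrum.mem_iff] at hμ
  apply hμ
  have : algebraMap ℝ (U →L[ℝ] U) μ - T = -(T + (-μ) • (1 : U →L[ℝ] U)) := by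
    rw [Algebra.algebraMap_eq_smul_one]
    ext x; simp; abel
  rw [this]
  exact (aux_isUnit T hpos (by linarith)).neg

lemma aux_contractive {X : Type*} [TopologicalSpace X] [CompactSpace X]
    {A : Type*} [NormedRing A] [StarRing A] [CStarRing A] [NormedAlgebra ℝ A]
    (Φ : C(X, ℝ) →⋆ₐ[ℝ] A) (hΦ : Continuous Φ) (g : C(X, ℝ)) : ‖Φ g‖ ≤ ‖g‖ := by
  obtain ⟨K, hK, hb⟩ := SemilinearMapClass.bound_of_continuous Φ hΦ
  have hg_sa : IsSelfAdjoint g := by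
    rw [IsSelfAdjoint]; ext x; simp
  have ha_sa : IsSelfAdjoint (Φ g) := by
    rw [IsSelfAdjoint, ← map_star, hg_sa]
  have key : ∀ n : ℕ, ‖Φ g‖ ^ 2 ^ n ≤ K * ‖g‖ ^ 2 ^ n := by
    intro n
    have h1 : ‖Φ g ^ 2 ^ n‖ = ‖Φ g‖ ^ 2 ^ n := by
      rw [← coe_nnnorm, ha_sa.nnnorm_pow_two_pow n, NNReal.coe_pow, coe_nnnorm]
    have h2 : ‖g ^ 2 ^ n‖ = ‖g‖ ^ 2 ^ n := by
      rw [← coe_nnnorm, hg_sa.nnnorm_pow_two_pow n, NNReal.coe_pow, coe_nnnorm]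
    calc ‖Φ g‖ ^ 2 ^ n = ‖Φ (g ^ 2 ^ n)‖ := by rw [map_pow, h1]
      _ ≤ K * ‖g ^ 2 ^ n‖ := hb _
      _ = K * ‖g‖ ^ 2 ^ n := by rw [h2]
  by_contra hlt
  push_neg at hlt
  rcases eq_or_lt_of_le (norm_nonneg g) with hg0 | hg0
  · have h0 := key 0
    simp [← hg0] at h0
    simp [h0, ← hg0] at hlt
  · set t := ‖Φ g‖ / ‖g‖ with ht
    have htgt : 1 < t := (one_lt_div hg0).2 hlt
    obtain ⟨n, hn⟩ := pow_unbounded_of_one_lt K htgt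
    have h1 : t ^ n ≤ t ^ 2 ^ n := pow_le_pow_right₀ htgt.le (Nat.lt_two_pow_self (n := n)).le
    have h2 : t ^ 2 ^ n ≤ K := by
      rw [ht, div_pow, div_le_iff₀ (by positivity)]
      exact key n
    linarith

lemma aux_pointwise_s15 {x α ν : ℝ} (hx : 0 ≤ x) (hα : 0 < α) (hν0 : 0 < ν) (hν1 : ν ≤ 1) :
    α * x ^ ν * (x + α)⁻¹ ≤ α ^ ν := by
  have hxα : 0 < x + α := by linarith
  have hxν : 0 ≤ x ^ ν := Real.rpow_nonneg hx ν
  have hαν : 0 < α ^ ν := Real.rpow_pos_of_pos hα ν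
  rw [← div_eq_mul_inv, div_le_iff₀ hxα]
  rcases le_total x α with hle | hle
  · have h3 : x ^ ν ≤ α ^ ν := Real.rpow_le_rpow hx hle hν0.le
    nlinarith
  · have hx0 : 0 < x := lt_of_lt_of_le hα hle
    have h3 : x ^ (ν - 1) ≤ α ^ (ν - 1) :=
      Real.rpow_le_rpow_of_nonpos hα hle (by linarith)
    have h4 : x ^ ν = x ^ (ν - 1) * x := by
      rw [← Real.rpow_add_one hx0.ne' (ν - 1), sub_add_cancel]
    have h5 : α ^ ν = α ^ (ν - 1) * α := by
      rw [← Real.rpow_add_one hα.ne' (ν - 1), sub_add_cancel]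
    have h6 : 0 ≤ x ^ (ν - 1) := Real.rpow_nonneg hx0.le _
    have h7 : 0 ≤ α ^ (ν - 1) := Real.rpow_nonneg hα.le _
    rw [h4, h5]
    nlinarith [mul_le_mul_of_nonneg_right h3 (mul_nonneg hα.le hx0.le)]

end AuxLemmas

set_option maxHeartbeats 2000000 in
/-- classical rates for quadratic Tikhonov regularisation,
with `u_α^δ = (F*F + α I)⁻¹ F* v^δ` and `α(δ) = c δ^(2/(2ν+1))`. -/
theorem classical_quadratic_rates
    {U V : Type*} [NormedAddCommGroup U] [InnerProductSpace ℝ U] [CompleteSpace U]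
    [NormedAddCommGroup V] [InnerProductSpace ℝ V] [CompleteSpace V]
    (F : U →L[ℝ] V) (ν : ℝ) (hν0 : 0 < ν) (hν1 : ν ≤ 1)
    (P : U →L[ℝ] U) (hP : IsFractionalPower ((adjoint F).comp F) ν P)
    (ω udag : U) (hsource : udag = P ω) (vdag : V) (hv : vdag = F udag)
    (c : ℝ) (hc : 0 < c) :
    ∃ C : ℝ, 0 < C ∧
      ∀ δ : ℝ, 0 < δ → ∀ vδ : V, ‖vdag - vδ‖ ≤ δ →
        ‖(Ring.inverse ((adjoint F).comp F + (c * δ ^ (2 / (2 * ν + 1))) • (1 : U →L[ℝ] U)))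
            (adjoint F vδ) - udag‖
          ≤ C * δ ^ (2 * ν / (2 * ν + 1)) := by
  obtain ⟨Φ, hΦc, hΦid, f, hf, hΦf⟩ := hP
  have hTpos : ∀ u, 0 ≤ ⟪((adjoint F).comp F) u, u⟫ := fun u => by
    rw [comp_apply, adjoint_inner_left]
    exact real_inner_self_nonneg
  have hspec := aux_spectrum_nonneg_s15 ((adjoint F).comp F) hTpos
  have hcontr := fun g => aux_contractive Φ hΦc g
  have h2ν : (0:ℝ) < 2 * ν + 1 := by linarith
  set r : ℝ := 2 * ν / (2 * ν + 1) with hr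
  set m : ℝ := 2 / (2 * ν + 1) with hm
  have hsc : 0 < Real.sqrt c := Real.sqrt_pos.2 hc
  refine ⟨1 / (2 * Real.sqrt c) + c ^ ν * ‖ω‖, by positivity, ?_⟩
  intro δ hδ vδ hvδ
  set α : ℝ := c * δ ^ m with hα
  have hαpos : 0 < α := mul_pos hc (Real.rpow_pos_of_pos hδ m)
  set A : U →L[ℝ] U := (adjoint F).comp F + α • 1 with hA
  have hne : ∀ x : spectrum ℝ ((adjoint F).comp F), (x : ℝ) + α ≠ 0 := fun x =>
    ne_of_gt (by have := hspec x x.2; linarith)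
  set einv : C(spectrum ℝ ((adjoint F).comp F), ℝ) :=
    ⟨fun x => ((x : ℝ) + α)⁻¹,
      (continuous_subtype_val.add continuous_const).inv₀ hne⟩ with heinv
  set ee : C(spectrum ℝ ((adjoint F).comp F), ℝ) :=
    (ContinuousMap.id ℝ).restrict (spectrum ℝ ((adjoint F).comp F))
      + algebraMap ℝ C(spectrum ℝ ((adjoint F).comp F), ℝ) α with hee
  have hΦe : Φ ee = A := by
    rw [hee, map_add, hΦid, AlgHomClass.commutes, Algebra.algebraMap_eq_smul_one, hA]
  have hmul1 : einv * ee = 1 := by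
    ext x
    simp [heinv, hee]
    exact inv_mul_cancel₀ (hne x)
  have hinvA : (Φ einv) * A = 1 := by rw [← hΦe, ← map_mul, hmul1, map_one]
  have hAinv : A * (Φ einv) = 1 := by
    rw [← hΦe, ← map_mul, mul_comm ee einv, hmul1, map_one]
  have hRing : Ring.inverse A = Φ einv := Ring.inverse_unit ⟨A, Φ einv, hAinv, hinvA⟩
  have hinv_applyA : ∀ u : U, (Φ einv) (A u) = u := fun u => by
    have := congrArg (fun S : U →L[ℝ] U => S u) hinvA
    simpa [mul_apply] using this
  have hA_applyinv : ∀ u : U, A ((Φ einv) u) = u := fun u => by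
    have := congrArg (fun S : U →L[ℝ] U => S u) hAinv
    simpa [mul_apply] using this
  have hdag : (Φ einv) (adjoint F vdag) = udag - α • (Φ einv) udag := by
    have h1 : adjoint F vdag = A udag - α • udag := by
      rw [hv, hA]
      simp only [add_apply, smul_apply, one_apply_eq_self, add_sub_cancel_right]
      rw [comp_apply]
    rw [h1, map_sub, hinv_applyA, map_smul]
  have hdecomp : (Φ einv) (adjoint F vδ) - udag
      = (Φ einv) (adjoint F (vδ - vdag)) - α • (Φ einv) udag := by
    rw [map_sub (adjoint F), map_sub (Φ einv), hdag]
    abel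
  have hb1 : ‖(Φ einv) (adjoint F (vδ - vdag))‖ ≤ 1 / (2 * Real.sqrt c) * δ ^ r := by
    set w : V := vδ - vdag with hw
    have hwδ : ‖w‖ ≤ δ := by rw [hw, norm_sub_rev]; exact hvδ
    set u1 : U := (Φ einv) (adjoint F w) with hu1
    have hAu1 : A u1 = adjoint F w := hA_applyinv _
    have hkey : ‖F u1‖ ^ 2 + α * ‖u1‖ ^ 2 ≤ ‖w‖ * ‖F u1‖ := by
      have e1 : ⟪A u1, u1⟫ = ‖F u1‖ ^ 2 + α * ‖u1‖ ^ 2 := by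
        rw [hA]
        simp only [add_apply, smul_apply, one_apply_eq_self, inner_add_left, real_inner_smul_left]
        rw [comp_apply, adjoint_inner_left, real_inner_self_eq_norm_sq,
          real_inner_self_eq_norm_sq]
      have e2 : ⟪A u1, u1⟫ = ⟪w, F u1⟫ := by rw [hAu1, adjoint_inner_left]
      have e3 : ⟪w, F u1⟫ ≤ ‖w‖ * ‖F u1‖ := real_inner_le_norm w (F u1)
      rw [e1] at e2
      linarith [e2 ▸ e3]
    have hδm : 0 < δ ^ m := Real.rpow_pos_of_pos hδ m
    have hδ2 : (δ ^ r) ^ 2 = δ ^ 2 / δ ^ m := by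
      rw [sq, ← Real.rpow_add hδ]
      rw [show r + r = 2 - m by rw [hr, hm]; field_simp; ring]
      rw [Real.rpow_sub hδ, Real.rpow_two]
    have hsq : ‖u1‖ ^ 2 ≤ (1 / (2 * Real.sqrt c) * δ ^ r) ^ 2 := by
      have hc2 : Real.sqrt c ^ 2 = c := Real.sq_sqrt hc.le
      calc ‖u1‖ ^ 2 ≤ δ ^ 2 / (4 * α) := by
            rw [le_div_iff₀ (by positivity)]
            nlinarith [norm_nonneg w, norm_nonneg (F u1), hwδ, hδ.le,
              sq_nonneg (‖F u1‖ - ‖w‖ / 2)]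
        _ = (1 / (2 * Real.sqrt c) * δ ^ r) ^ 2 := by
            rw [mul_pow, hδ2, hα, div_pow, one_pow, mul_pow, hc2]
            field_simp
            ring
    have hB : (0:ℝ) ≤ 1 / (2 * Real.sqrt c) * δ ^ r := by positivity
    exact (pow_le_pow_iff_left₀ (norm_nonneg u1) hB two_ne_zero).1 hsq
  have hb2 : ‖α • (Φ einv) udag‖ ≤ c ^ ν * ‖ω‖ * δ ^ r := by
    have hop : α • (Φ einv) udag = (Φ (α • (einv * f.restrict (spectrum ℝ ((adjoint F).comp F))))) ω := by
      rw [hsource, map_smul, map_mul, hΦf]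
      simp [mul_apply]
    have hnormfun : ‖α • (einv * f.restrict (spectrum ℝ ((adjoint F).comp F)))‖ ≤ α ^ ν := by
      refine (ContinuousMap.norm_le _ (Real.rpow_nonneg hαpos.le ν)).2 fun x => ?_
      have hx : (0:ℝ) ≤ (x : ℝ) := hspec x x.2
      have hfx : f x = (x : ℝ) ^ ν := hf x x.2
      simp only [ContinuousMap.smul_apply, ContinuousMap.mul_apply, heinv,
        ContinuousMap.coe_mk, ContinuousMap.restrict_apply, hfx, smul_eq_mul]
      rw [Real.norm_eq_abs, abs_of_nonneg (by positivity)]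
      calc α * (((x : ℝ) + α)⁻¹ * (x : ℝ) ^ ν) = α * (x : ℝ) ^ ν * ((x : ℝ) + α)⁻¹ := by ring
        _ ≤ α ^ ν := aux_pointwise_s15 hx hαpos hν0 hν1
    calc ‖α • (Φ einv) udag‖
        = ‖(Φ (α • (einv * f.restrict (spectrum ℝ ((adjoint F).comp F))))) ω‖ := by rw [hop]
      _ ≤ ‖Φ (α • (einv * f.restrict (spectrum ℝ ((adjoint F).comp F))))‖ * ‖ω‖ := le_opNorm _ _
      _ ≤ α ^ ν * ‖ω‖ := mul_le_mul_of_nonneg_right ((hcontr _).trans hnormfun) (norm_nonneg ω)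
      _ = c ^ ν * ‖ω‖ * δ ^ r := by
          rw [hα, Real.mul_rpow hc.le (Real.rpow_nonneg hδ.le m), ← Real.rpow_mul hδ.le,
            show m * ν = r by rw [hm, hr]; ring]
          ring
  calc ‖(Ring.inverse A) (adjoint F vδ) - udag‖
      = ‖(Φ einv) (adjoint F (vδ - vdag)) - α • (Φ einv) udag‖ := by rw [hRing, hdecomp]
    _ ≤ ‖(Φ einv) (adjoint F (vδ - vdag))‖ + ‖α • (Φ einv) udag‖ := norm_sub_le _ _
    _ ≤ 1 / (2 * Real.sqrt c) * δ ^ r + c ^ ν * ‖ω‖ * δ ^ r := add_le_add hb1 hb2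
    _ = (1 / (2 * Real.sqrt c) + c ^ ν * ‖ω‖) * δ ^ r := by ring
end
end
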